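/- arXiv:1307.8414 — 7 statements merged into one kernel-verified Lean document; each statement's English description precedes it below -/
import Mathlib

section
/- For any T ∈ U(c,d) with c ≥ d, there exist unitary matrices U_1, V_1 ∈ U(c), unitary matrices U_2, V_2 ∈ U(d), and a real diagonal d×d matrix Γ = diag(γ_1,...,γ_d) with γ_1 ≥ γ_2 ≥ ... ≥ γ_d ≥ 0, such that T = diag(U_1, U_2) · M(Γ) · diag(V_1, V_2), where M(Γ) is the (c+d)×(c+d) matrix with blocks cosh(Γ) (top-left d×d corner), identity 1_{c-d} (middle), sinh(Γ) in the off-diagonal corners coupling the first d and last d coordinates, and cosh(Γ) in the bottom-right d×d block. -/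
open Matrix MeasureTheory Filter
open scoped ComplexOrder
noncomputable section

/-- The singular values of a complex square matrix indexed by `Fin n`,
listed in decreasing order (`sv T 0` is the largest). -/
def sv {n : ℕ} (T : Matrix (Fin n) (Fin n) ℂ) : Fin n → ℝ := fun i =>
  let ev := (Matrix.isHermitian_conjTranspose_mul_self T).eigenvalues
  Real.sqrt (ev (Tuple.sort ev i.rev))

/-- The hermitian form matrix `G_{c,d} = diag(1_c, -1_d)`. -/
def Gcd (c d : ℕ) : Matrix (Fin c ⊕ Fin d) (Fin c ⊕ Fin d) ℂ :=
  Matrix.fromBlocks 1 0 0 (-1)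

/-- The pseudo-unitary group `U(c,d) = {T : Tᴴ G_{c,d} T = G_{c,d}}`. -/
def pseudoU (c d : ℕ) : Set (Matrix (Fin c ⊕ Fin d) (Fin c ⊕ Fin d) ℂ) :=
  { T | Tᴴ * Gcd c d * T = Gcd c d }

/-- Singular values, in decreasing order, of a matrix indexed by `Fin c ⊕ Fin d`. -/
def svS {c d : ℕ} (T : Matrix (Fin c ⊕ Fin d) (Fin c ⊕ Fin d) ℂ) : Fin (c + d) → ℝ :=
  sv (T.submatrix finSumFinEquiv.symm finSumFinEquiv.symm)

/-- `N_r(T) = Σ_{i=1}^r ln((σ_i(T) + σ_i(T)⁻¹)/2)` for decreasingly ordered singular values. -/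
def NS {c d : ℕ} (r : ℕ) (T : Matrix (Fin c ⊕ Fin d) (Fin c ⊕ Fin d) ℂ) : ℝ :=
  ∑ i : Fin (c + d), if (i : ℕ) < r then Real.log ((svS T i + (svS T i)⁻¹) / 2) else 0

/-- The unitary `U_θ^{(c,d)} = diag(e^{2πiθ} 1_c, 1_d)`. -/
def Umat (c d : ℕ) (θ : ℝ) : Matrix (Fin c ⊕ Fin d) (Fin c ⊕ Fin d) ℂ :=
  Matrix.fromBlocks (Complex.exp (((2 * Real.pi * θ : ℝ) : ℂ) * Complex.I) • 1) 0 0 1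

/-- The symplectic form matrix `J = [[0, 1_d], [-1_d, 0]]`. -/
def Jmat (d : ℕ) : Matrix (Fin d ⊕ Fin d) (Fin d ⊕ Fin d) ℂ :=
  Matrix.fromBlocks 0 1 (-1) 0

/-- The hermitian-symplectic group `HSp(2d) = {T : Tᴴ J T = J}`. -/
def HSp (d : ℕ) : Set (Matrix (Fin d ⊕ Fin d) (Fin d ⊕ Fin d) ℂ) :=
  { T | Tᴴ * Jmat d * T = Jmat d }

/-- The Cayley transform `C = (1/√2)[[1, i·1],[1, -i·1]]`. -/
def Cayley (d : ℕ) : Matrix (Fin d ⊕ Fin d) (Fin d ⊕ Fin d) ℂ :=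
  ((Real.sqrt 2 : ℂ))⁻¹ • Matrix.fromBlocks 1 (Complex.I • 1) 1 ((-Complex.I) • 1)

/-- The rotation matrix `R_θ = [[cos(πθ)1, -sin(πθ)1],[sin(πθ)1, cos(πθ)1]]`. -/
def Rrot (d : ℕ) (θ : ℝ) : Matrix (Fin d ⊕ Fin d) (Fin d ⊕ Fin d) ℂ :=
  Matrix.fromBlocks ((Real.cos (Real.pi * θ) : ℂ) • 1) (-((Real.sin (Real.pi * θ) : ℂ) • 1))
    ((Real.sin (Real.pi * θ) : ℂ) • 1) ((Real.cos (Real.pi * θ) : ℂ) • 1)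

/-- The spectral radius of the `d`-th exterior power: the product of the `d` largest
absolute values of eigenvalues (roots of the characteristic polynomial, with
algebraic multiplicity). -/
def rhoLam {m : Type*} [Fintype m] [DecidableEq m] (d : ℕ) (M : Matrix m m ℂ) : ℝ :=
  (((M.charpoly.roots.map (fun z : ℂ => ‖z‖)).sort (· ≥ ·)).take d).prod

/-- `‖Λ^r T‖`: the product of the `r` largest singular values of `T`. -/
def normLam {c d : ℕ} (r : ℕ) (T : Matrix (Fin c ⊕ Fin d) (Fin c ⊕ Fin d) ℂ) : ℝ :=
  ∏ i : Fin (c + d), if (i : ℕ) < r then svS T i else 1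

/-- The Möbius action `T · M = (AM + B)(CM + D)⁻¹` of a block matrix on `c × d` matrices. -/
def mob {c d : ℕ} (T : Matrix (Fin c ⊕ Fin d) (Fin c ⊕ Fin d) ℂ)
    (M : Matrix (Fin c) (Fin d) ℂ) : Matrix (Fin c) (Fin d) ℂ :=
  (T.toBlocks₁₁ * M + T.toBlocks₁₂) * (T.toBlocks₂₁ * M + T.toBlocks₂₂)⁻¹

/-- The cocycle `B_n(x) = B(f^{n-1}x) ⋯ B(fx) B(x)`. -/
def cocycle {X : Type*} {m : Type*} [Fintype m] [DecidableEq m]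
    (f : X → X) (B : X → Matrix m m ℂ) (x : X) : ℕ → Matrix m m ℂ
  | 0 => 1
  | n + 1 => B (f^[n] x) * cocycle f B x n

lemma sum_ite_val {c d : ℕ} {β : Type*} [AddCommMonoid β] (i : Fin c) (f : Fin d → β) :
    ∑ k : Fin d, (if (i : ℕ) = (k : ℕ) then f k else 0)
      = if h : (i : ℕ) < d then f ⟨i, h⟩ else 0 := by
  by_cases h : (i : ℕ) < d
  · rw [dif_pos h, Finset.sum_eq_single (⟨(i : ℕ), h⟩ : Fin d)]
    · rw [if_pos rfl]
    · intro k _ hk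
      rw [if_neg]
      intro hik
      exact hk (by ext; exact hik.symm)
    · intro h'; exact absurd (Finset.mem_univ _) h'
  · rw [dif_neg h]
    apply Finset.sum_eq_zero
    intro k _
    rw [if_neg]
    intro hik
    exact h (hik ▸ k.2)

lemma antitone_spectral {d : ℕ} {H : Matrix (Fin d) (Fin d) ℂ} (hH : H.IsHermitian)
    (hpsd : (H - 1).PosSemidef) :
    ∃ (W : Matrix (Fin d) (Fin d) ℂ) (μ : Fin d → ℝ),
      W ∈ Matrix.unitaryGroup (Fin d) ℂ ∧ Antitone μ ∧ (∀ i, 1 ≤ μ i) ∧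
      H = W * Matrix.diagonal (fun i => (μ i : ℂ)) * Wᴴ := by
  set ev := hH.eigenvalues with hev
  have hev1 : ∀ j, 1 ≤ ev j := by
    intro j
    have hv := hH.mulVec_eigenvectorBasis j
    set v : Fin d → ℂ := ⇑(hH.eigenvectorBasis j) with hvdef
    have h0 := hpsd.dotProduct_mulVec_nonneg v
    have hvv : star v ⬝ᵥ v = 1 := by
      have h1 : (inner ℂ (hH.eigenvectorBasis j) (hH.eigenvectorBasis j) : ℂ) = 1 := by
        rw [inner_self_eq_norm_sq_to_K, hH.eigenvectorBasis.orthonormal.1 j]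
        norm_num
      rw [← h1, PiLp.inner_apply]
      simp [dotProduct, RCLike.inner_apply, mul_comm]
      exact Finset.sum_congr rfl fun _ _ => RCLike.mul_conj _
    rw [sub_mulVec, one_mulVec, hv] at h0
    rw [dotProduct_sub, dotProduct_smul, hvv] at h0
    rw [Complex.real_smul, mul_one] at h0
    have h2 : (0:ℂ) ≤ ((ev j - 1 : ℝ) : ℂ) := by push_cast; exact h0
    rw [Complex.zero_le_real] at h2
    linarith
  set σ : Equiv.Perm (Fin d) := Fin.revPerm.trans (Tuple.sort ev) with hσ
  refine ⟨((hH.eigenvectorUnitary : Matrix (Fin d) (Fin d) ℂ)).submatrix id σ, ev ∘ σ,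
    ?_, ?_, fun i => hev1 _, ?_⟩
  · rw [Matrix.mem_unitaryGroup_iff']
    have h3 : star (((hH.eigenvectorUnitary : Matrix (Fin d) (Fin d) ℂ)).submatrix id σ)
        = (star (hH.eigenvectorUnitary : Matrix (Fin d) (Fin d) ℂ)).submatrix σ id := by
      rw [Matrix.star_eq_conjTranspose, Matrix.star_eq_conjTranspose, conjTranspose_submatrix]
    rw [h3]
    have h4 := submatrix_mul_equiv (star (hH.eigenvectorUnitary : Matrix (Fin d) (Fin d) ℂ))
      (hH.eigenvectorUnitary : Matrix (Fin d) (Fin d) ℂ) (⇑σ) (Equiv.refl (Fin d)) (⇑σ)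
    simp only [Equiv.coe_refl] at h4
    rw [h4, Unitary.coe_star_mul_self, submatrix_one_equiv]
  · intro i j hij
    exact Tuple.monotone_sort ev (Fin.rev_le_rev.mpr hij)
  · have hdiag : Matrix.diagonal (fun i => ((ev ∘ σ) i : ℂ))
        = (Matrix.diagonal ((fun r : ℝ => (r:ℂ)) ∘ ev) : Matrix (Fin d) (Fin d) ℂ).submatrix σ σ := by
      rw [submatrix_diagonal _ _ σ.injective]
      rfl
    rw [hdiag, conjTranspose_submatrix, ← Matrix.star_eq_conjTranspose,
      submatrix_mul_equiv, submatrix_mul_equiv, submatrix_id_id]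
    have h5 := hH.spectral_theorem
    rw [Unitary.conjStarAlgAut_apply] at h5
    convert h5 using 3
    all_goals rfl

set_option maxHeartbeats 2000000 in
theorem stmt3' (c d : ℕ) (hcd : d ≤ c) (T : Matrix (Fin c ⊕ Fin d) (Fin c ⊕ Fin d) ℂ)
    (hT : Tᴴ * (Matrix.fromBlocks 1 0 0 (-1)) * T = Matrix.fromBlocks 1 0 0 (-1)) :
    ∃ (U₁ V₁ : Matrix (Fin c) (Fin c) ℂ) (U₂ V₂ : Matrix (Fin d) (Fin d) ℂ) (γ : Fin d → ℝ),
      U₁ ∈ Matrix.unitaryGroup (Fin c) ℂ ∧ V₁ ∈ Matrix.unitaryGroup (Fin c) ℂ ∧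
      U₂ ∈ Matrix.unitaryGroup (Fin d) ℂ ∧ V₂ ∈ Matrix.unitaryGroup (Fin d) ℂ ∧
      Antitone γ ∧ (∀ i, 0 ≤ γ i) ∧
      T = Matrix.fromBlocks U₁ 0 0 U₂ *
          Matrix.fromBlocks
            (Matrix.of fun i j : Fin c =>
              if (i : ℕ) = (j : ℕ) then
                (if hi : (i : ℕ) < d then (Real.cosh (γ ⟨i, hi⟩) : ℂ) else 1)
              else 0)
            (Matrix.of fun (i : Fin c) (j : Fin d) =>
              if (i : ℕ) = (j : ℕ) then (Real.sinh (γ j) : ℂ) else 0)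
            (Matrix.of fun (i : Fin d) (j : Fin c) =>
              if (i : ℕ) = (j : ℕ) then (Real.sinh (γ i) : ℂ) else 0)
            (Matrix.diagonal fun i => (Real.cosh (γ i) : ℂ)) *
          Matrix.fromBlocks V₁ 0 0 V₂ := by
  classical
  set G : Matrix (Fin c ⊕ Fin d) (Fin c ⊕ Fin d) ℂ := Matrix.fromBlocks 1 0 0 (-1) with hG
  obtain ⟨A, B, C, D, hTb⟩ : ∃ A B C D, T = Matrix.fromBlocks A B C D :=
    ⟨T.toBlocks₁₁, T.toBlocks₁₂, T.toBlocks₂₁, T.toBlocks₂₂, (fromBlocks_toBlocks T).symm⟩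
  -- relations from Tᴴ G T = G
  have key : Tᴴ * G * T = G := hT
  rw [hTb, hG, fromBlocks_conjTranspose, Matrix.fromBlocks_multiply,
    Matrix.fromBlocks_multiply] at key
  simp only [Matrix.mul_one, Matrix.mul_zero, Matrix.zero_mul, add_zero, zero_add,
    Matrix.mul_neg, Matrix.neg_mul] at key
  rw [Matrix.fromBlocks_inj] at key
  obtain ⟨-, -, k21, k22⟩ := key
  -- relation T G Tᴴ = G
  have hGG : G * G = 1 := by
    rw [hG, Matrix.fromBlocks_multiply]
    simp only [Matrix.mul_one, Matrix.mul_zero, Matrix.zero_mul, add_zero, zero_add,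
      Matrix.neg_mul, Matrix.mul_neg, neg_neg, neg_zero]
    exact Matrix.fromBlocks_one
  have hleft : (G * Tᴴ * G) * T = 1 := by
    calc (G * Tᴴ * G) * T = G * (Tᴴ * G * T) := by noncomm_ring
    _ = G * G := by rw [hT]
    _ = 1 := hGG
  have hright : T * (G * Tᴴ * G) = 1 := mul_eq_one_comm.mp hleft
  have key2 : T * G * Tᴴ = G := by
    have h1 : T * G * Tᴴ * G = 1 := by
      calc T * G * Tᴴ * G = T * (G * Tᴴ * G) := by noncomm_ring
      _ = 1 := hright
    calc T * G * Tᴴ = T * G * Tᴴ * (G * G) := by rw [hGG, Matrix.mul_one]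
    _ = (T * G * Tᴴ * G) * G := by noncomm_ring
    _ = G := by rw [h1, Matrix.one_mul]
  rw [hTb, hG, fromBlocks_conjTranspose, Matrix.fromBlocks_multiply,
    Matrix.fromBlocks_multiply] at key2
  simp only [Matrix.mul_one, Matrix.mul_zero, Matrix.zero_mul, add_zero, zero_add,
    Matrix.mul_neg, Matrix.neg_mul] at key2
  rw [Matrix.fromBlocks_inj] at key2
  obtain ⟨k11', -, -, -⟩ := key2
  -- k21 : Bᴴ * A + -(Dᴴ * C) = 0 ; k22 : Bᴴ * B + -(Dᴴ * D) = -1 ; k11' : A * Aᴴ + -(B * Bᴴ) = 1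
  have hDC : Dᴴ * C = Bᴴ * A := by
    have := k21
    rw [add_neg_eq_zero] at this
    exact this.symm
  have hBB : Bᴴ * B = Dᴴ * D - 1 := by
    have := k22
    rw [add_neg_eq_iff_eq_add] at this
    rw [this]; noncomm_ring
  have hAA : A * Aᴴ = 1 + B * Bᴴ := by
    have := k11'
    rw [add_neg_eq_iff_eq_add] at this
    exact this
  -- spectral decomposition of DᴴD
  have hHerm : (Dᴴ * D).IsHermitian := Matrix.isHermitian_conjTranspose_mul_self D
  have hpsd : (Dᴴ * D - 1).PosSemidef := by
    rw [← hBB]; exact Matrix.posSemidef_conjTranspose_mul_self B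
  obtain ⟨W, μ, hWmem, hμanti, hμ1, hspec⟩ := antitone_spectral hHerm hpsd
  have hWuW : star W * W = 1 := Matrix.mem_unitaryGroup_iff'.mp hWmem
  have hWWu : W * star W = 1 := Matrix.mem_unitaryGroup_iff.mp hWmem
  -- the hyperbolic angles
  set γ : Fin d → ℝ := fun i => Real.arsinh (Real.sqrt (μ i - 1)) with hγdef
  have hsinh : ∀ i, Real.sinh (γ i) = Real.sqrt (μ i - 1) := fun i => Real.sinh_arsinh _
  have hcosh : ∀ i, Real.cosh (γ i) = Real.sqrt (μ i) := by
    intro i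
    rw [hγdef]
    rw [Real.cosh_arsinh, Real.sq_sqrt (by linarith [hμ1 i])]
    norm_num
  have hcoshsq : ∀ i, (Real.cosh (γ i)) * (Real.cosh (γ i)) = μ i := by
    intro i
    rw [hcosh i]
    exact Real.mul_self_sqrt (by linarith [hμ1 i])
  have hsinhsq : ∀ i, (Real.sinh (γ i)) * (Real.sinh (γ i)) = μ i - 1 := by
    intro i
    rw [hsinh i]
    exact Real.mul_self_sqrt (by linarith [hμ1 i])
  have hγ0 : ∀ i, 0 ≤ γ i := fun i => Real.arsinh_nonneg_iff.mpr (Real.sqrt_nonneg _)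
  have hγanti : Antitone γ := by
    intro i j hij
    rw [hγdef]
    exact Real.arsinh_le_arsinh.mpr (Real.sqrt_le_sqrt (by linarith [hμanti hij]))
  have hcoshpos : ∀ i, (0:ℝ) < Real.cosh (γ i) := fun i => Real.cosh_pos _
  -- the structured middle matrices
  have diag_congr : ∀ {f g : Fin d → ℂ}, (∀ i, f i = g i) → Matrix.diagonal f = Matrix.diagonal g :=
    fun h => by rw [funext h]
  have hc0 : ∀ i, ((Real.cosh (γ i) : ℝ) : ℂ) ≠ 0 := fun i => by
    exact_mod_cast (hcoshpos i).ne'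
  set K : Matrix (Fin d) (Fin d) ℂ := Matrix.diagonal (fun i => (Real.cosh (γ i) : ℂ)) with hK
  set Kinv : Matrix (Fin d) (Fin d) ℂ :=
    Matrix.diagonal (fun i => ((Real.cosh (γ i) : ℂ))⁻¹) with hKinv
  have hKinvK : Kinv * K = 1 := by
    rw [hKinv, hK, Matrix.diagonal_mul_diagonal]
    exact (diag_congr fun i => inv_mul_cancel₀ (hc0 i)).trans Matrix.diagonal_one
  have hKKinv : K * Kinv = 1 := by
    rw [hKinv, hK, Matrix.diagonal_mul_diagonal]
    exact (diag_congr fun i => mul_inv_cancel₀ (hc0 i)).trans Matrix.diagonal_one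
  have hdiagμ : Matrix.diagonal (fun i => (μ i : ℂ)) = K * K := by
    rw [hK, Matrix.diagonal_mul_diagonal]
    exact diag_congr fun i => by rw [← Complex.ofReal_mul, hcoshsq i]
  have hKH : Kᴴ = K := by
    rw [hK, Matrix.diagonal_conjTranspose]
    exact diag_congr fun i => by simp only [Pi.star_apply, Complex.star_def, Complex.conj_ofReal]
  have hKinvH : Kinvᴴ = Kinv := by
    rw [hKinv, Matrix.diagonal_conjTranspose]
    exact diag_congr fun i => by
      simp only [Pi.star_apply, star_inv₀, Complex.star_def, Complex.conj_ofReal]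
  -- U₂ and D
  set U₂ : Matrix (Fin d) (Fin d) ℂ := D * W * Kinv with hU₂def
  have hDD : Dᴴ * D = W * (K * K) * Wᴴ := by rw [← hdiagμ, ← hspec]
  have hU₂u : star U₂ * U₂ = 1 := by
    rw [hU₂def, Matrix.star_eq_conjTranspose]
    calc (D * W * Kinv)ᴴ * (D * W * Kinv)
        = Kinvᴴ * (Wᴴ * (Dᴴ * D) * W) * Kinv := by
          simp only [Matrix.conjTranspose_mul]; noncomm_ring
    _ = Kinvᴴ * (Wᴴ * (W * (K * K) * Wᴴ) * W) * Kinv := by rw [hDD]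
    _ = Kinvᴴ * ((Wᴴ * W) * (K * K) * (Wᴴ * W)) * Kinv := by noncomm_ring
    _ = Kinv * (K * K) * Kinv := by
          rw [← Matrix.star_eq_conjTranspose W, hWuW, hKinvH]
          noncomm_ring
    _ = (Kinv * K) * (K * Kinv) := by noncomm_ring
    _ = 1 := by rw [hKinvK, hKKinv, Matrix.one_mul]
  have hU₂mem : U₂ ∈ Matrix.unitaryGroup (Fin d) ℂ := Matrix.mem_unitaryGroup_iff'.mpr hU₂u
  have hU₂U₂H : U₂ * U₂ᴴ = 1 := by
    rw [← Matrix.star_eq_conjTranspose]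
    exact mul_eq_one_comm.mp hU₂u
  have hD : D = U₂ * K * Wᴴ := by
    rw [hU₂def]
    calc D = D * (W * Wᴴ) := by
          rw [← Matrix.star_eq_conjTranspose, hWWu, Matrix.mul_one]
    _ = D * W * (Kinv * K) * Wᴴ := by rw [hKinvK]; noncomm_ring
    _ = D * W * Kinv * K * Wᴴ := by noncomm_ring
  have hWH1 : Wᴴ * W = 1 := by rw [← Matrix.star_eq_conjTranspose]; exact hWuW
  have hWH2 : W * Wᴴ = 1 := by rw [← Matrix.star_eq_conjTranspose]; exact hWWu
  -- the B block
  have hBWip : (B * W)ᴴ * (B * W)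
      = Matrix.diagonal (fun i => ((Real.sinh (γ i) : ℂ) * (Real.sinh (γ i) : ℂ))) := by
    have h1 : (B * W)ᴴ * (B * W) = Wᴴ * (Bᴴ * B) * W := by
      rw [Matrix.conjTranspose_mul]
      simp only [Matrix.mul_assoc]
    rw [h1, hBB, Matrix.mul_sub, Matrix.sub_mul, Matrix.mul_one, hspec]
    have h2 : Wᴴ * (W * Matrix.diagonal (fun i => (μ i : ℂ)) * Wᴴ) * W
        = Matrix.diagonal (fun i => (μ i : ℂ)) := by
      simp only [Matrix.mul_assoc, hWH1, Matrix.mul_one]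
      rw [← Matrix.mul_assoc, hWH1, Matrix.one_mul]
    rw [h2, hWH1, ← Matrix.diagonal_one, Matrix.diagonal_sub]
    exact diag_congr fun i => by
      rw [← Complex.ofReal_mul, hsinhsq i]; push_cast; ring
  set col : Fin d → EuclideanSpace ℂ (Fin c) := fun j => WithLp.toLp 2 (fun k => (B * W) k j) with hcoldef
  have hcolip : ∀ j j' : Fin d, (inner ℂ (col j) (col j') : ℂ)
      = if j = j' then ((Real.sinh (γ j) : ℂ) * (Real.sinh (γ j) : ℂ)) else 0 := by
    intro j j'
    have h3 : (inner ℂ (col j) (col j') : ℂ) = ((B * W)ᴴ * (B * W)) j j' := by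
      rw [Matrix.mul_apply, PiLp.inner_apply]
      simp only [RCLike.inner_apply, Matrix.conjTranspose_apply]
      exact Finset.sum_congr rfl fun _ _ => mul_comm _ _
    rw [h3, hBWip, Matrix.diagonal_apply]
  set vv : Fin c → EuclideanSpace ℂ (Fin c) := fun i =>
    if h : (i : ℕ) < d then ((Real.sinh (γ ⟨i, h⟩) : ℂ))⁻¹ • col ⟨i, h⟩ else 0 with hvv
  set ss : Set (Fin c) := {i | ∃ h : (i : ℕ) < d, Real.sinh (γ ⟨i, h⟩) ≠ 0} with hss
  have horth : Orthonormal ℂ (ss.restrict vv) := by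
    rw [orthonormal_iff_ite]
    rintro ⟨i, hi, hsi⟩ ⟨j, hj, hsj⟩
    simp only [Set.restrict, Set.domRestrict_apply]
    rw [hvv]
    simp only [dif_pos hi, dif_pos hj]
    rw [inner_smul_left, inner_smul_right, hcolip]
    by_cases hij : i = j
    · subst hij
      have heq : (⟨(i : ℕ), hi⟩ : Fin d) = ⟨(i : ℕ), hj⟩ := rfl
      rw [if_pos heq, if_pos (Subtype.ext rfl)]
      rw [map_inv₀, Complex.conj_ofReal]
      have hne : ((Real.sinh (γ ⟨(i : ℕ), hi⟩) : ℝ) : ℂ) ≠ 0 := by exact_mod_cast hsi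
      have hne' : Complex.sinh ((γ ⟨(i : ℕ), hi⟩ : ℝ) : ℂ) ≠ 0 := by
        rw [← Complex.ofReal_sinh]; exact hne
      field_simp
    · have hne1 : (⟨(i : ℕ), hi⟩ : Fin d) ≠ ⟨(j : ℕ), hj⟩ := by
        intro h
        have hval := congrArg (fun x : Fin d => (x : ℕ)) h
        exact hij (Fin.ext hval)
      have hne2 : (⟨i, ⟨hi, hsi⟩⟩ : ss) ≠ ⟨j, ⟨hj, hsj⟩⟩ := by
        intro h; exact hij (congrArg Subtype.val h)
      rw [if_neg hne1, if_neg hne2, mul_zero, mul_zero]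
  obtain ⟨bb, hbb⟩ := horth.exists_orthonormalBasis_extension_of_card_eq
    (by simp [finrank_euclideanSpace])
  set U₁ : Matrix (Fin c) (Fin c) ℂ := Matrix.of (fun k i => bb i k) with hU₁def
  have hU₁u : star U₁ * U₁ = 1 := by
    ext i j
    rw [Matrix.mul_apply, Matrix.one_apply]
    have h4 := orthonormal_iff_ite.mp bb.orthonormal i j
    rw [← h4, PiLp.inner_apply]
    simp only [RCLike.inner_apply, Matrix.star_apply, Matrix.of_apply, hU₁def]
    exact Finset.sum_congr rfl fun _ _ => mul_comm _ _
  have hU₁mem : U₁ ∈ Matrix.unitaryGroup (Fin c) ℂ := Matrix.mem_unitaryGroup_iff'.mpr hU₁u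
  have hU₁H1 : U₁ᴴ * U₁ = 1 := by rw [← Matrix.star_eq_conjTranspose]; exact hU₁u
  have hU₁H2 : U₁ * U₁ᴴ = 1 := by
    rw [← Matrix.star_eq_conjTranspose]; exact mul_eq_one_comm.mp hU₁u
  set Sc : Matrix (Fin c) (Fin d) ℂ := Matrix.of (fun (i : Fin c) (j : Fin d) =>
    if (i : ℕ) = (j : ℕ) then (Real.sinh (γ j) : ℂ) else 0) with hScdef
  have hU₁BW : U₁ᴴ * (B * W) = Sc := by
    ext i j
    have hip : (U₁ᴴ * (B * W)) i j = (inner ℂ (bb i) (col j) : ℂ) := by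
      rw [Matrix.mul_apply, PiLp.inner_apply]
      simp only [RCLike.inner_apply, Matrix.conjTranspose_apply, Matrix.of_apply, hU₁def]
      exact Finset.sum_congr rfl fun _ _ => mul_comm _ _
    rw [hip, hScdef, Matrix.of_apply]
    by_cases hsj : Real.sinh (γ j) = 0
    · have hcz : col j = 0 := by
        have h0 : (inner ℂ (col j) (col j) : ℂ) = 0 := by
          rw [hcolip, if_pos rfl, hsj]; norm_num
        exact inner_self_eq_zero.mp h0
      rw [hcz, inner_zero_right, hsj]
      simp
    · have hi₀lt : (j : ℕ) < c := lt_of_lt_of_le j.2 hcd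
      set i₀ : Fin c := ⟨(j : ℕ), hi₀lt⟩ with hi₀
      have hi₀d : ((i₀ : ℕ)) < d := j.2
      have hfin : (⟨(i₀ : ℕ), hi₀d⟩ : Fin d) = j := Fin.ext rfl
      have hmem : i₀ ∈ ss := ⟨hi₀d, by rw [hfin]; exact hsj⟩
      have hbv : bb i₀ = ((Real.sinh (γ j) : ℂ))⁻¹ • col j := by
        rw [hbb i₀ hmem, hvv]
        simp only [dif_pos hi₀d, hfin]
      have hnej : ((Real.sinh (γ j) : ℝ) : ℂ) ≠ 0 := by exact_mod_cast hsj
      have hcolj : col j = (Real.sinh (γ j) : ℂ) • bb i₀ := by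
        rw [hbv, smul_smul, mul_inv_cancel₀ hnej, one_smul]
      rw [hcolj, inner_smul_right, orthonormal_iff_ite.mp bb.orthonormal i i₀]
      by_cases hii : i = i₀
      · rw [if_pos hii, if_pos (by rw [hii])]
        norm_num
      · rw [if_neg hii, if_neg (fun h => hii (Fin.ext h)), mul_zero]
  have hB : B = U₁ * Sc * Wᴴ := by
    rw [← hU₁BW]
    calc B = (U₁ * U₁ᴴ) * (B * (W * Wᴴ)) := by rw [hU₁H2, hWH2, Matrix.one_mul, Matrix.mul_one]
    _ = U₁ * (U₁ᴴ * (B * W)) * Wᴴ := by simp only [Matrix.mul_assoc]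
  -- the Δ block (c×c diagonal)
  have diag_congr' : ∀ {f g : Fin c → ℂ},
      (∀ i, f i = g i) → Matrix.diagonal f = Matrix.diagonal g := fun h => by rw [funext h]
  set δf : Fin c → ℂ := fun i =>
    if h : (i : ℕ) < d then (Real.cosh (γ ⟨i, h⟩) : ℂ) else 1 with hδf
  set Δ : Matrix (Fin c) (Fin c) ℂ := Matrix.diagonal δf with hΔdef
  have hδ0 : ∀ i, δf i ≠ 0 := by
    intro i
    rw [hδf]
    dsimp only
    split_ifs with h
    · exact_mod_cast (hcoshpos ⟨i, h⟩).ne'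
    · exact one_ne_zero
  set Δinv : Matrix (Fin c) (Fin c) ℂ := Matrix.diagonal (fun i => (δf i)⁻¹) with hΔinvdef
  have hΔinvΔ : Δinv * Δ = 1 := by
    rw [hΔinvdef, hΔdef, Matrix.diagonal_mul_diagonal]
    exact (diag_congr' fun i => inv_mul_cancel₀ (hδ0 i)).trans Matrix.diagonal_one
  have hΔΔinv : Δ * Δinv = 1 := by
    rw [hΔinvdef, hΔdef, Matrix.diagonal_mul_diagonal]
    exact (diag_congr' fun i => mul_inv_cancel₀ (hδ0 i)).trans Matrix.diagonal_one
  have hΔH : Δᴴ = Δ := by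
    rw [hΔdef, Matrix.diagonal_conjTranspose]
    refine diag_congr' fun i => ?_
    simp only [Pi.star_apply, hδf]
    split_ifs with h
    · exact Complex.conj_ofReal _
    · exact star_one _
  have hΔinvH : Δinvᴴ = Δinv := by
    rw [hΔinvdef, Matrix.diagonal_conjTranspose]
    refine diag_congr' fun i => ?_
    simp only [Pi.star_apply, star_inv₀, hδf]
    split_ifs with h
    · rw [Complex.star_def, Complex.conj_ofReal]
    · rw [star_one]
  have hScScH : 1 + Sc * Scᴴ = Δ * Δ := by
    rw [hΔdef, Matrix.diagonal_mul_diagonal]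
    ext i i'
    rw [Matrix.add_apply, Matrix.mul_apply, Matrix.one_apply, Matrix.diagonal_apply]
    have hterm : ∀ k : Fin d, Sc i k * Scᴴ k i'
        = if (i : ℕ) = (k : ℕ) then
            (if (i' : ℕ) = (k : ℕ)
              then ((Real.sinh (γ k) : ℂ) * (Real.sinh (γ k) : ℂ)) else 0)
          else 0 := by
      intro k
      rw [Matrix.conjTranspose_apply, hScdef]
      simp only [Matrix.of_apply]
      split_ifs with h1 h2 <;> simp [← Complex.ofReal_sinh, Complex.conj_ofReal]
    rw [Finset.sum_congr rfl (fun k _ => hterm k), sum_ite_val]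
    by_cases hii : i = i'
    · subst hii
      rw [if_pos rfl, if_pos rfl, hδf]
      dsimp only
      by_cases h : (i : ℕ) < d
      · rw [dif_pos h, dif_pos h, if_pos rfl, ← Complex.ofReal_mul, ← Complex.ofReal_mul]
        norm_cast
        nlinarith [Real.cosh_sq_sub_sinh_sq (γ ⟨(i : ℕ), h⟩)]
      · rw [dif_neg h, dif_neg h]
        norm_num
    · rw [if_neg hii, if_neg hii, zero_add]
      by_cases h : (i : ℕ) < d
      · rw [dif_pos h, if_neg (fun hh => hii (Fin.ext hh.symm))]
      · rw [dif_neg h]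
  -- V₁
  set V₁ : Matrix (Fin c) (Fin c) ℂ := Δinv * (U₁ᴴ * A) with hV₁def
  have hBU₁' : ∀ (X : Matrix (Fin c) (Fin c) ℂ), True := fun _ => trivial
  have hU₁B : U₁ᴴ * B = Sc * Wᴴ := by
    calc U₁ᴴ * B = U₁ᴴ * (B * (W * Wᴴ)) := by rw [hWH2, Matrix.mul_one]
    _ = (U₁ᴴ * (B * W)) * Wᴴ := by simp only [Matrix.mul_assoc]
    _ = Sc * Wᴴ := by rw [hU₁BW]
  have hAAU : U₁ᴴ * (A * Aᴴ) * U₁ = Δ * Δ := by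
    rw [hAA]
    have e1 : U₁ᴴ * (1 + B * Bᴴ) * U₁ = U₁ᴴ * U₁ + (U₁ᴴ * B) * (Bᴴ * U₁) := by
      rw [Matrix.mul_add, Matrix.add_mul, Matrix.mul_one]
      simp only [Matrix.mul_assoc]
    rw [e1, hU₁H1, hU₁B]
    have e2 : Bᴴ * U₁ = W * Scᴴ := by
      have := congrArg Matrix.conjTranspose hU₁B
      rw [Matrix.conjTranspose_mul, Matrix.conjTranspose_mul,
        Matrix.conjTranspose_conjTranspose, Matrix.conjTranspose_conjTranspose] at this
      exact this
    rw [e2]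
    have e3 : Sc * Wᴴ * (W * Scᴴ) = Sc * Scᴴ := by
      calc Sc * Wᴴ * (W * Scᴴ) = Sc * ((Wᴴ * W) * Scᴴ) := by simp only [Matrix.mul_assoc]
      _ = Sc * Scᴴ := by rw [hWH1, Matrix.one_mul]
    rw [e3, hScScH]
  have hV₁V₁H : V₁ * V₁ᴴ = 1 := by
    rw [hV₁def]
    have e4 : (Δinv * (U₁ᴴ * A))ᴴ = Aᴴ * U₁ * Δinv := by
      rw [Matrix.conjTranspose_mul, Matrix.conjTranspose_mul, hΔinvH,
        Matrix.conjTranspose_conjTranspose]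
    rw [e4]
    calc Δinv * (U₁ᴴ * A) * (Aᴴ * U₁ * Δinv)
        = Δinv * (U₁ᴴ * (A * Aᴴ) * U₁) * Δinv := by simp only [Matrix.mul_assoc]
    _ = Δinv * (Δ * Δ) * Δinv := by rw [hAAU]
    _ = (Δinv * Δ) * (Δ * Δinv) := by simp only [Matrix.mul_assoc]
    _ = 1 := by rw [hΔinvΔ, hΔΔinv, Matrix.one_mul]
  have hV₁mem : V₁ ∈ Matrix.unitaryGroup (Fin c) ℂ := by
    rw [Matrix.mem_unitaryGroup_iff, Matrix.star_eq_conjTranspose]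
    exact hV₁V₁H
  have hAdec : A = U₁ * Δ * V₁ := by
    rw [hV₁def]
    calc A = (U₁ * U₁ᴴ) * A := by rw [hU₁H2, Matrix.one_mul]
    _ = U₁ * ((Δ * Δinv) * (U₁ᴴ * A)) := by
        rw [hΔΔinv, Matrix.one_mul, Matrix.mul_assoc]
    _ = U₁ * Δ * (Δinv * (U₁ᴴ * A)) := by simp only [Matrix.mul_assoc]
  -- Sr and the C block
  set Sr : Matrix (Fin d) (Fin c) ℂ := Matrix.of (fun (i : Fin d) (j : Fin c) =>
    if (i : ℕ) = (j : ℕ) then (Real.sinh (γ i) : ℂ) else 0) with hSrdef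
  have hScH : Scᴴ = Sr := by
    ext i j
    rw [Matrix.conjTranspose_apply, hScdef, hSrdef]
    simp only [Matrix.of_apply]
    by_cases h : (j : ℕ) = (i : ℕ)
    · rw [if_pos h, if_pos h.symm, Complex.star_def, Complex.conj_ofReal]
    · rw [if_neg h, if_neg (fun hh => h hh.symm), star_zero]
  have hSrΔ : Sr * Δ = K * Sr := by
    ext i j
    rw [hΔdef, Matrix.mul_diagonal, hK, Matrix.diagonal_mul, hSrdef]
    simp only [Matrix.of_apply]
    by_cases h : (i : ℕ) = (j : ℕ)
    · have hjd : (j : ℕ) < d := h ▸ i.2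
      have hfin2 : (⟨(j : ℕ), hjd⟩ : Fin d) = i := Fin.ext h.symm
      rw [if_pos h, hδf]
      dsimp only
      rw [dif_pos hjd, hfin2, ← Complex.ofReal_mul, ← Complex.ofReal_mul, mul_comm]
    · rw [if_neg h, zero_mul, mul_zero]
  have hBA : Bᴴ * A = W * (K * (Sr * V₁)) := by
    calc Bᴴ * A = Bᴴ * (U₁ * Δ * V₁) := by rw [← hAdec]
    _ = (Bᴴ * U₁) * Δ * V₁ := by simp only [Matrix.mul_assoc]
    _ = (W * Scᴴ) * Δ * V₁ := by
        have hBU : Bᴴ * U₁ = W * Scᴴ := by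
          have := congrArg Matrix.conjTranspose hU₁B
          rw [Matrix.conjTranspose_mul, Matrix.conjTranspose_mul,
            Matrix.conjTranspose_conjTranspose, Matrix.conjTranspose_conjTranspose] at this
          exact this
        rw [hBU]
    _ = W * ((Sr * Δ) * V₁) := by rw [hScH]; simp only [Matrix.mul_assoc]
    _ = W * (K * (Sr * V₁)) := by rw [hSrΔ]; simp only [Matrix.mul_assoc]
  have hU₂C : U₂ᴴ * C = Sr * V₁ := by
    have h1 : Dᴴ * C = W * (K * (U₂ᴴ * C)) := by
      rw [hD, Matrix.conjTranspose_mul, Matrix.conjTranspose_mul, hKH,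
        Matrix.conjTranspose_conjTranspose]
      simp only [Matrix.mul_assoc]
    have h2 : W * (K * (U₂ᴴ * C)) = W * (K * (Sr * V₁)) := by rw [← h1, hDC, hBA]
    have h3 : K * (U₂ᴴ * C) = K * (Sr * V₁) := by
      have h4 := congrArg (fun M => Wᴴ * M) h2
      simp only [← Matrix.mul_assoc, hWH1, Matrix.one_mul] at h4
      simpa only [Matrix.mul_assoc] using h4
    have h5 := congrArg (fun M => Kinv * M) h3
    simp only [← Matrix.mul_assoc, hKinvK, Matrix.one_mul] at h5
    simpa only [Matrix.mul_assoc] using h5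
  have hCdec : C = U₂ * Sr * V₁ := by
    rw [Matrix.mul_assoc, ← hU₂C, ← Matrix.mul_assoc, hU₂U₂H, Matrix.one_mul]
  -- assembling
  have hV₂mem : Wᴴ ∈ Matrix.unitaryGroup (Fin d) ℂ := by
    rw [← Matrix.star_eq_conjTranspose]
    exact Unitary.star_mem hWmem
  refine ⟨U₁, V₁, U₂, Wᴴ, γ, hU₁mem, hV₁mem, hU₂mem, hV₂mem, hγanti, hγ0, ?_⟩
  have hM11 : (Matrix.of fun i j : Fin c =>
      if (i : ℕ) = (j : ℕ) then
        (if hi : (i : ℕ) < d then (Real.cosh (γ ⟨i, hi⟩) : ℂ) else 1)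
      else 0) = Δ := by
    ext i j
    rw [hΔdef, Matrix.diagonal_apply]
    simp only [Matrix.of_apply]
    by_cases hij : i = j
    · rw [if_pos (congrArg Fin.val hij), if_pos hij, hδf]
    · rw [if_neg (fun h => hij (Fin.ext h)), if_neg hij]
  rw [hTb, hM11, Matrix.fromBlocks_multiply, Matrix.fromBlocks_multiply]
  simp only [Matrix.zero_mul, Matrix.mul_zero, add_zero, zero_add]
  rw [Matrix.fromBlocks_inj]
  exact ⟨hAdec, hB, hCdec, hD⟩





/-- Structure theorem: every `T ∈ U(c,d)` with `c ≥ d` decomposes as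
`diag(U₁,U₂) · M(Γ) · diag(V₁,V₂)` with `U₁,V₁ ∈ U(c)`, `U₂,V₂ ∈ U(d)` and
`Γ = diag(γ₁ ≥ … ≥ γ_d ≥ 0)`, where `M(Γ)` has blocks `diag(cosh Γ, 1_{c-d})`,
`(sinh Γ; 0)`, `(sinh Γ, 0)` and `cosh Γ`. -/
theorem stmt3 (c d : ℕ) (hcd : d ≤ c) (T : Matrix (Fin c ⊕ Fin d) (Fin c ⊕ Fin d) ℂ)
    (hT : T ∈ pseudoU c d) :
    ∃ (U₁ V₁ : Matrix (Fin c) (Fin c) ℂ) (U₂ V₂ : Matrix (Fin d) (Fin d) ℂ) (γ : Fin d → ℝ),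
      U₁ ∈ Matrix.unitaryGroup (Fin c) ℂ ∧ V₁ ∈ Matrix.unitaryGroup (Fin c) ℂ ∧
      U₂ ∈ Matrix.unitaryGroup (Fin d) ℂ ∧ V₂ ∈ Matrix.unitaryGroup (Fin d) ℂ ∧
      Antitone γ ∧ (∀ i, 0 ≤ γ i) ∧
      T = Matrix.fromBlocks U₁ 0 0 U₂ *
          Matrix.fromBlocks
            (Matrix.of fun i j : Fin c =>
              if (i : ℕ) = (j : ℕ) then
                (if hi : (i : ℕ) < d then (Real.cosh (γ ⟨i, hi⟩) : ℂ) else 1)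
              else 0)
            (Matrix.of fun (i : Fin c) (j : Fin d) =>
              if (i : ℕ) = (j : ℕ) then (Real.sinh (γ j) : ℂ) else 0)
            (Matrix.of fun (i : Fin d) (j : Fin c) =>
              if (i : ℕ) = (j : ℕ) then (Real.sinh (γ i) : ℂ) else 0)
            (Matrix.diagonal fun i => (Real.cosh (γ i) : ℂ)) *
          Matrix.fromBlocks V₁ 0 0 V₂ := by
  exact stmt3' c d hcd T hT

end
end

section
/- Let T ∈ U(c,d) with c ≥ d. The singular values of T, listed in decreasing order σ_1 ≥ ... ≥ σ_{c+d}, satisfy: σ_{c+d+1-i}(T) = σ_i(T)^{-1} for i = 1,...,d, and σ_i(T) = 1 for d < i ≤ c. In particular, the singular values come in reciprocal pairs with all remaining ones equal to 1. -/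
open Matrix MeasureTheory Filter
open scoped ComplexOrder
noncomputable section

namespace Stmt4Aux

open Polynomial Finset

theorem charpoly_conj {m : Type*} [Fintype m] [DecidableEq m]
    (P Q M : Matrix m m ℂ) (h1 : P * Q = 1) : (P * M * Q).charpoly = M.charpoly := by
  have hPQ : (C : ℂ →+* ℂ[X]).mapMatrix P * (C : ℂ →+* ℂ[X]).mapMatrix Q = 1 := by
    rw [← _root_.map_mul, h1, RingHom.map_one]
  have hsc : ∀ N : Matrix m m ℂ[X], Matrix.scalar m (X : ℂ[X]) * N = N * Matrix.scalar m X :=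
    fun N => (Matrix.scalar_commute X (fun r => (Commute.all _ _)) N).eq
  have hcm : charmatrix (P * M * Q) =
      (C : ℂ →+* ℂ[X]).mapMatrix P * charmatrix M * (C : ℂ →+* ℂ[X]).mapMatrix Q := by
    unfold charmatrix
    rw [mul_sub, sub_mul]
    congr 1
    · rw [← hsc, mul_assoc, hPQ, mul_one]
    · rw [← _root_.map_mul, ← _root_.map_mul]
  rw [Matrix.charpoly, Matrix.charpoly, hcm, det_mul, det_mul]
  have hd : ((C : ℂ →+* ℂ[X]).mapMatrix P).det * ((C : ℂ →+* ℂ[X]).mapMatrix Q).det = 1 := by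
    rw [← det_mul, hPQ, det_one]
  calc ((C : ℂ →+* ℂ[X]).mapMatrix P).det * (charmatrix M).det * ((C : ℂ →+* ℂ[X]).mapMatrix Q).det
      = ((C : ℂ →+* ℂ[X]).mapMatrix P).det * ((C : ℂ →+* ℂ[X]).mapMatrix Q).det * (charmatrix M).det := by ring
    _ = (charmatrix M).det := by rw [hd, one_mul]

theorem charpoly_diag {m : Type*} [Fintype m] [DecidableEq m] (v : m → ℂ) :
    (Matrix.diagonal v).charpoly = ∏ i, (X - C (v i)) := by
  have h : charmatrix (Matrix.diagonal v) = Matrix.diagonal (fun i => X - C (v i)) := by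
    ext i j
    by_cases h : i = j
    · subst h; simp
    · simp [h, charmatrix_apply_ne _ _ _ h, Matrix.diagonal_apply_ne _ h]
  rw [Matrix.charpoly, h, det_diagonal]

theorem herm_charpoly {m : Type*} [Fintype m] [DecidableEq m] {A : Matrix m m ℂ}
    (hA : A.IsHermitian) : A.charpoly = ∏ i, (X - C (hA.eigenvalues i : ℂ)) := by
  have hU := hA.spectral_theorem
  conv_lhs => rw [hU]; simp only [Unitary.conjStarAlgAut_apply, Unitary.coe_star]
  rw [charpoly_conj _ _ _ (Matrix.mem_unitaryGroup_iff.mp (hA.eigenvectorUnitary).2),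
    charpoly_diag]
  rfl

theorem herm_inv_charpoly {m : Type*} [Fintype m] [DecidableEq m] {A : Matrix m m ℂ}
    (hA : A.IsHermitian) (hpos : ∀ i, hA.eigenvalues i ≠ 0) :
    A⁻¹.charpoly = ∏ i, (X - C ((hA.eigenvalues i : ℂ))⁻¹) := by
  have hinv : A⁻¹ = (hA.eigenvectorUnitary : Matrix m m ℂ) *
      Matrix.diagonal (fun i => ((hA.eigenvalues i : ℂ))⁻¹) *
      (star (hA.eigenvectorUnitary : Matrix m m ℂ)) := by
    apply Matrix.inv_eq_right_inv
    nth_rewrite 1 [hA.spectral_theorem]; simp only [Unitary.conjStarAlgAut_apply, Unitary.coe_star]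
    have hUU : (star (hA.eigenvectorUnitary : Matrix m m ℂ)) *
        (hA.eigenvectorUnitary : Matrix m m ℂ) = 1 :=
      Matrix.mem_unitaryGroup_iff'.mp (hA.eigenvectorUnitary).2
    calc ((hA.eigenvectorUnitary : Matrix m m ℂ) * Matrix.diagonal (RCLike.ofReal ∘ hA.eigenvalues) * star (hA.eigenvectorUnitary : Matrix m m ℂ)) *
        ((hA.eigenvectorUnitary : Matrix m m ℂ) * Matrix.diagonal (fun i => ((hA.eigenvalues i : ℂ))⁻¹) * star (hA.eigenvectorUnitary : Matrix m m ℂ))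
        = (hA.eigenvectorUnitary : Matrix m m ℂ) * (Matrix.diagonal (RCLike.ofReal ∘ hA.eigenvalues) * ((star (hA.eigenvectorUnitary : Matrix m m ℂ)) * (hA.eigenvectorUnitary : Matrix m m ℂ)) * Matrix.diagonal (fun i => ((hA.eigenvalues i : ℂ))⁻¹)) * star (hA.eigenvectorUnitary : Matrix m m ℂ) := by
          simp only [Matrix.mul_assoc]
      _ = 1 := by
          rw [hUU, Matrix.mul_one, Matrix.diagonal_mul_diagonal]
          have h1 : (fun i => (RCLike.ofReal ∘ hA.eigenvalues) i * ((hA.eigenvalues i : ℂ))⁻¹) = fun _ => (1:ℂ) := by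
            funext i
            simp only [Function.comp_apply, RCLike.ofReal_real_eq_id, id_eq]
            exact mul_inv_cancel₀ (Complex.ofReal_ne_zero.mpr (hpos i))
          rw [h1, Matrix.diagonal_one, Matrix.mul_one,
            Matrix.mem_unitaryGroup_iff.mp (hA.eigenvectorUnitary).2]
  rw [hinv, charpoly_conj _ _ _ (Matrix.mem_unitaryGroup_iff.mp (hA.eigenvectorUnitary).2),
    charpoly_diag]

theorem multiset_inv_eq {m : Type*} [Fintype m] [DecidableEq m] (f : m → ℝ)
    (h : (∏ i, (X - C (f i : ℂ))) = ∏ i, (X - C ((f i : ℂ))⁻¹)) :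
    Multiset.map f Finset.univ.val = Multiset.map (fun i => (f i)⁻¹) Finset.univ.val := by
  have hr : ∀ g : m → ℂ, (∏ i, (X - C (g i))).roots = Multiset.map g Finset.univ.val := by
    intro g
    have h1 : (∏ i, (X - C (g i))) = ((Multiset.map g Finset.univ.val).map (fun a => X - C a)).prod := by
      rw [Multiset.map_map]; rfl
    rw [h1, Polynomial.roots_multiset_prod_X_sub_C]
  have h2 := congrArg Polynomial.roots h
  rw [hr, hr] at h2
  have h3 : Multiset.map (Complex.ofReal ∘ f) Finset.univ.val
      = Multiset.map (Complex.ofReal ∘ (fun i => (f i)⁻¹)) Finset.univ.val := by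
    simpa [Function.comp_def, Complex.ofReal_inv] using h2
  rw [← Multiset.map_map, ← Multiset.map_map] at h3
  exact Multiset.map_injective Complex.ofReal_injective h3

theorem monotone_multiset_unique {n : ℕ} (f g : Fin n → ℝ) (hf : Monotone f) (hg : Monotone g)
    (h : Multiset.map f Finset.univ.val = Multiset.map g Finset.univ.val) : f = g := by
  have hperm : List.Perm (List.ofFn f) (List.ofFn g) := by
    rw [← Multiset.coe_eq_coe]
    have e1 : (List.ofFn f : Multiset ℝ) = Multiset.map f Finset.univ.val := by
      rw [List.ofFn_eq_map]; rfl
    have e2 : (List.ofFn g : Multiset ℝ) = Multiset.map g Finset.univ.val := by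
      rw [List.ofFn_eq_map]; rfl
    rw [e1, e2, h]
  exact List.ofFn_injective (hperm.eq_of_sortedLE hf.sortedLE_ofFn hg.sortedLE_ofFn)

theorem multiset_map_perm {n : ℕ} (f : Fin n → ℝ) (σ : Equiv.Perm (Fin n)) :
    Multiset.map (f ∘ σ) Finset.univ.val = Multiset.map f Finset.univ.val := by
  rw [← Multiset.map_map]
  congr 1
  calc Multiset.map σ Finset.univ.val = (Finset.univ.map σ.toEmbedding).val := by
        rw [Finset.map_val]; rfl
    _ = Finset.univ.val := by rw [Finset.map_univ_equiv]

theorem conj_dot {n : ℕ} (B M : Matrix (Fin n) (Fin n) ℂ) (x y : Fin n → ℂ) :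
    star (B *ᵥ x) ⬝ᵥ (M *ᵥ (B *ᵥ y)) = star x ⬝ᵥ ((Bᴴ * M * B) *ᵥ y) := by
  rw [Matrix.mulVec_mulVec, Matrix.star_mulVec, Matrix.dotProduct_mulVec,
    Matrix.vecMul_vecMul, Matrix.dotProduct_mulVec, Matrix.mul_assoc]

theorem star_mul_re (z : ℂ) (r : ℝ) : (star z * ((r : ℂ) * z)).re = r * Complex.normSq z := by
  have h : star z * ((r : ℂ) * z) = ((r * Complex.normSq z : ℝ) : ℂ) := by
    push_cast
    rw [Complex.normSq_eq_conj_mul_self, Complex.star_def]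
    ring
  rw [h, Complex.ofReal_re]

theorem star_mul_re_one (z : ℂ) : (star z * z).re = Complex.normSq z := by
  have := star_mul_re z 1
  simpa using this

theorem star_mul_re_neg (z : ℂ) : (star z * (-1 * z)).re = -Complex.normSq z := by
  have := star_mul_re z (-1)
  push_cast at this
  simpa using this

theorem count_le {n c : ℕ} (T : Matrix (Fin n) (Fin n) ℂ) (g : Fin n → ℂ)
    (hg : ∀ j, g j = if (j : ℕ) < c then 1 else -1)
    (hT : Tᴴ * Matrix.diagonal g * T = Matrix.diagonal g) :
    Fintype.card {j : Fin n // 1 < (Matrix.isHermitian_conjTranspose_mul_self T).eigenvalues j}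
      ≤ Fintype.card {j : Fin n // ¬ (j : ℕ) < c} := by
  have hA := Matrix.isHermitian_conjTranspose_mul_self T
  set ev := hA.eigenvalues with hev
  set U := (hA.eigenvectorUnitary : Matrix (Fin n) (Fin n) ℂ) with hUdef
  set D := Matrix.diagonal (fun j => (ev j : ℂ)) with hDdef
  have hUU : Uᴴ * U = 1 := by
    rw [← Matrix.star_eq_conjTranspose]
    exact Matrix.mem_unitaryGroup_iff'.mp hA.eigenvectorUnitary.2
  have hAU : (Tᴴ * T) * U = U * D := by
    conv_lhs => rw [hA.spectral_theorem]; simp only [Unitary.conjStarAlgAut_apply, Unitary.coe_star]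
    rw [Matrix.star_eq_conjTranspose, Matrix.mul_assoc, Matrix.mul_assoc, hUU, Matrix.mul_one]
    rfl
  have hUAU : Uᴴ * (Tᴴ * T) * U = D := by
    rw [Matrix.mul_assoc, hAU, ← Matrix.mul_assoc, hUU, Matrix.one_mul]
  let ext : ({j : Fin n // 1 < ev j} → ℂ) → (Fin n → ℂ) := fun v j =>
    if h : 1 < ev j then v ⟨j, h⟩ else 0
  have ext_add : ∀ v w, ext (v + w) = ext v + ext w := by
    intro v w; funext j; simp only [ext, Pi.add_apply]; split <;> simp
  have ext_smul : ∀ (a : ℂ) v, ext (a • v) = a • ext v := by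
    intro a v; funext j; simp only [ext, Pi.smul_apply, smul_eq_mul]; split <;> simp
  let φ : ({j : Fin n // 1 < ev j} → ℂ) →ₗ[ℂ] ({j : Fin n // ¬ (j : ℕ) < c} → ℂ) :=
    { toFun := fun v => fun j => (T *ᵥ (U *ᵥ ext v)) j.val
      map_add' := by
        intro v w; funext j
        simp only [ext_add, Matrix.mulVec_add, Pi.add_apply]
      map_smul' := by
        intro a v; funext j
        simp only [ext_smul, Matrix.mulVec_smul, Pi.smul_apply, RingHom.id_apply] }
  have hinj : Function.Injective φ := by
    rw [← LinearMap.ker_eq_bot, LinearMap.ker_eq_bot']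
    intro v hv
    set vt : Fin n → ℂ := ext v with hvt
    set W : Fin n → ℂ := U *ᵥ vt with hW
    set u : Fin n → ℂ := T *ᵥ W with hu
    have hu0 : ∀ j : Fin n, ¬ (j : ℕ) < c → u j = 0 := fun j hj => congrFun hv ⟨j, hj⟩
    have ha : star u ⬝ᵥ (Matrix.diagonal g *ᵥ u) = star u ⬝ᵥ u := by
      apply Finset.sum_congr rfl
      intro j _
      rw [Matrix.mulVec_diagonal]
      by_cases hj : (j : ℕ) < c
      · rw [hg j, if_pos hj, one_mul]
      · rw [hu0 j hj, mul_zero, mul_zero]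
    have e1 : star W ⬝ᵥ ((Tᴴ * T) *ᵥ W) = star vt ⬝ᵥ (D *ᵥ vt) := by
      rw [hW, conj_dot, hUAU]
    have e2 : star u ⬝ᵥ (Matrix.diagonal g *ᵥ u) = star W ⬝ᵥ (Matrix.diagonal g *ᵥ W) := by
      rw [hu, conj_dot, hT]
    have e3 : star u ⬝ᵥ u = star W ⬝ᵥ ((Tᴴ * T) *ᵥ W) := by
      have h := conj_dot T 1 W W
      rw [Matrix.one_mulVec, Matrix.mul_one] at h
      exact h
    have e4 : star W ⬝ᵥ W = star vt ⬝ᵥ vt := by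
      have h := conj_dot U 1 vt vt
      rw [Matrix.one_mulVec, Matrix.mul_one, hUU, Matrix.one_mulVec] at h
      exact h
    have hchain : star vt ⬝ᵥ (D *ᵥ vt) = star W ⬝ᵥ (Matrix.diagonal g *ᵥ W) := by
      rw [← e1, ← e3, ← ha, e2]
    have hL : (star vt ⬝ᵥ (D *ᵥ vt)).re = ∑ j, ev j * Complex.normSq (vt j) := by
      rw [dotProduct, Complex.re_sum]
      apply Finset.sum_congr rfl
      intro j _
      rw [Matrix.mulVec_diagonal]
      simp only [Pi.star_apply]
      exact star_mul_re (vt j) (ev j)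
    have hRre : (star W ⬝ᵥ (Matrix.diagonal g *ᵥ W)).re ≤ ∑ j, Complex.normSq (W j) := by
      rw [dotProduct, Complex.re_sum]
      apply Finset.sum_le_sum
      intro j _
      rw [Matrix.mulVec_diagonal, hg j]
      simp only [Pi.star_apply]
      by_cases hj : (j : ℕ) < c
      · rw [if_pos hj, one_mul, star_mul_re_one]
      · rw [if_neg hj, star_mul_re_neg]
        have := Complex.normSq_nonneg (W j)
        linarith
    have hWnorm : ∑ j, Complex.normSq (W j) = ∑ j, Complex.normSq (vt j) := by
      have h4 := congrArg Complex.re e4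
      rw [dotProduct, dotProduct, Complex.re_sum, Complex.re_sum] at h4
      calc ∑ j, Complex.normSq (W j) = ∑ j, (star W j * W j).re := by
            apply Finset.sum_congr rfl; intro j _
            simp only [Pi.star_apply]
            rw [star_mul_re_one]
        _ = ∑ j, (star vt j * vt j).re := h4
        _ = ∑ j, Complex.normSq (vt j) := by
            apply Finset.sum_congr rfl; intro j _
            simp only [Pi.star_apply]
            rw [star_mul_re_one]
    have hineq : ∑ j, ev j * Complex.normSq (vt j) ≤ ∑ j, Complex.normSq (vt j) := by
      rw [← hL, hchain, ← hWnorm]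
      exact hRre
    have hzero : ∀ j, (ev j - 1) * Complex.normSq (vt j) = 0 := by
      have hsum : ∑ j, (ev j - 1) * Complex.normSq (vt j) ≤ 0 := by
        have heq : ∑ j, (ev j - 1) * Complex.normSq (vt j)
            = (∑ j, ev j * Complex.normSq (vt j)) - ∑ j, Complex.normSq (vt j) := by
          rw [← Finset.sum_sub_distrib]
          apply Finset.sum_congr rfl
          intro j _; ring
        rw [heq]
        linarith
      have hnn : ∀ j ∈ Finset.univ, 0 ≤ (ev j - 1) * Complex.normSq (vt j) := by
        intro j _
        by_cases h : 1 < ev j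
        · exact mul_nonneg (by linarith) (Complex.normSq_nonneg _)
        · have hz : vt j = 0 := by simp only [hvt, ext, dif_neg h]
          rw [hz]
          simp
      have hall := (Finset.sum_eq_zero_iff_of_nonneg hnn).mp
        (le_antisymm hsum (Finset.sum_nonneg hnn))
      intro j
      exact hall j (Finset.mem_univ j)
    funext i
    have h0 := hzero i.val
    have hvi : vt i.val = v i := by simp only [hvt, ext, dif_pos i.2]
    rw [hvi] at h0
    have hnz : Complex.normSq (v i) = 0 := by
      rcases mul_eq_zero.mp h0 with h | h
      · exfalso
        have h2 := i.2
        have h3 := sub_eq_zero.mp h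
        simp only [hev] at h2 h3
        linarith
      · exact h
    simpa using Complex.normSq_eq_zero.mp hnz
  have hfr := LinearMap.finrank_le_finrank_of_injective hinj
  rwa [Module.finrank_pi, Module.finrank_pi] at hfr

theorem Gcd_reindex (c d : ℕ) (T : Matrix (Fin c ⊕ Fin d) (Fin c ⊕ Fin d) ℂ)
    (hT : Tᴴ * Gcd c d * T = Gcd c d) :
    (T.submatrix finSumFinEquiv.symm finSumFinEquiv.symm)ᴴ *
      Matrix.diagonal (fun j : Fin (c+d) => if (j:ℕ) < c then (1:ℂ) else -1) *
      (T.submatrix finSumFinEquiv.symm finSumFinEquiv.symm)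
      = Matrix.diagonal (fun j : Fin (c+d) => if (j:ℕ) < c then (1:ℂ) else -1) := by
  have hGd : Gcd c d = Matrix.diagonal (Sum.elim (fun _ : Fin c => (1:ℂ)) (fun _ : Fin d => -1)) := by
    ext (a|a) (b|b) <;>
      simp [Gcd, Matrix.one_apply, Matrix.diagonal_apply] <;> split <;> simp_all
  have hcomp : (Sum.elim (fun _ : Fin c => (1:ℂ)) (fun _ : Fin d => -1)) ∘ finSumFinEquiv.symm
      = fun j : Fin (c+d) => if (j:ℕ) < c then (1:ℂ) else -1 := by
    funext j
    rcases h : finSumFinEquiv.symm j with a | b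
    · have hja : j = finSumFinEquiv (Sum.inl a) := by rw [← h, Equiv.apply_symm_apply]
      have hj : (j : ℕ) = (a : ℕ) := by rw [hja]; simp [finSumFinEquiv]
      simp only [Function.comp_apply, h, Sum.elim_inl]
      rw [if_pos (show (j:ℕ) < c by rw [hj]; exact a.isLt)]
    · have hjb : j = finSumFinEquiv (Sum.inr b) := by rw [← h, Equiv.apply_symm_apply]
      have hj : (j : ℕ) = c + (b : ℕ) := by rw [hjb]; simp [finSumFinEquiv]
      simp only [Function.comp_apply, h, Sum.elim_inr]
      rw [if_neg (by omega)]
  have h1 := congrArg (fun M => M.submatrix finSumFinEquiv.symm finSumFinEquiv.symm) hT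
  rw [hGd] at h1
  rw [← Matrix.submatrix_mul_equiv _ _ _ finSumFinEquiv.symm _,
    ← Matrix.submatrix_mul_equiv _ _ _ finSumFinEquiv.symm _,
    ← Matrix.conjTranspose_submatrix, Matrix.submatrix_diagonal_equiv, hcomp] at h1
  exact h1

end Stmt4Aux

open Polynomial Finset Stmt4Aux in
/-- The singular values of `T ∈ U(c,d)` (decreasingly ordered) come in reciprocal pairs
`σ_{c+d+1-i} = σ_i⁻¹` for `i ≤ d`, and `σ_i = 1` for `d < i ≤ c`. -/
theorem stmt4 (c d : ℕ) (hcd : d ≤ c) (T : Matrix (Fin c ⊕ Fin d) (Fin c ⊕ Fin d) ℂ)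
    (hT : T ∈ pseudoU c d) :
    (∀ i : Fin (c + d), (i : ℕ) < d → svS T i.rev = (svS T i)⁻¹) ∧
    (∀ i : Fin (c + d), d ≤ (i : ℕ) → (i : ℕ) < c → svS T i = 1) := by
  set T' := T.submatrix finSumFinEquiv.symm finSumFinEquiv.symm with hT'def
  set g : Fin (c+d) → ℂ := fun j => if (j:ℕ) < c then 1 else -1 with hgdef
  have hG : T'ᴴ * Matrix.diagonal g * T' = Matrix.diagonal g := Gcd_reindex c d T hT
  have hA := Matrix.isHermitian_conjTranspose_mul_self T'
  set ev := hA.eigenvalues with hev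
  -- determinant facts
  have hDg : (Matrix.diagonal g).det ≠ 0 := by
    rw [Matrix.det_diagonal]
    apply Finset.prod_ne_zero_iff.mpr
    intro j _
    simp only [hgdef]
    split <;> norm_num
  have hdet1 : T'ᴴ.det * T'.det = 1 := by
    have h := congrArg Matrix.det hG
    rw [Matrix.det_mul, Matrix.det_mul] at h
    have h2 : (T'ᴴ.det * T'.det) * (Matrix.diagonal g).det = 1 * (Matrix.diagonal g).det := by
      rw [one_mul]; linear_combination h
    exact mul_right_cancel₀ hDg h2
  have hdetA : (T'ᴴ * T').det = 1 := by rw [Matrix.det_mul]; exact hdet1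
  have hev_ne : ∀ i, ev i ≠ 0 := by
    intro i h0
    have hprod := hA.det_eq_prod_eigenvalues
    rw [hdetA] at hprod
    have hz : (∏ j, (ev j : ℂ)) = 0 :=
      Finset.prod_eq_zero (Finset.mem_univ i) (by rw [hev] at h0 ⊢; rw [h0]; simp)
    simp only [hev] at hz
    exact one_ne_zero (hprod.trans hz)
  have hev_pos : ∀ i, 0 < ev i := fun i =>
    lt_of_le_of_ne (Matrix.eigenvalues_conjTranspose_mul_self_nonneg T' i) (Ne.symm (hev_ne i))
  -- inverse similarity
  have hgg : Matrix.diagonal g * Matrix.diagonal g = 1 := by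
    rw [Matrix.diagonal_mul_diagonal]
    have h1 : (fun i => g i * g i) = fun _ => (1:ℂ) := by
      funext i; simp only [hgdef]; split <;> norm_num
    rw [h1, Matrix.diagonal_one]
  have hgH : (Matrix.diagonal g)ᴴ = Matrix.diagonal g := by
    have hsg : star g = g := by
      funext i; simp only [hgdef, Pi.star_apply]; split <;> simp
    rw [Matrix.diagonal_conjTranspose, hsg]
  have hTinv : T'⁻¹ = Matrix.diagonal g * T'ᴴ * Matrix.diagonal g := by
    apply Matrix.inv_eq_left_inv
    calc (Matrix.diagonal g * T'ᴴ * Matrix.diagonal g) * T'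
        = Matrix.diagonal g * (T'ᴴ * Matrix.diagonal g * T') := by
          simp only [Matrix.mul_assoc]
      _ = Matrix.diagonal g * Matrix.diagonal g := by rw [hG]
      _ = 1 := hgg
  have hAinv : (T'ᴴ * T')⁻¹ = Matrix.diagonal g * (T'ᴴ * T') * Matrix.diagonal g := by
    have hTH : (T'ᴴ)⁻¹ = Matrix.diagonal g * T' * Matrix.diagonal g := by
      rw [← Matrix.conjTranspose_nonsing_inv, hTinv, Matrix.conjTranspose_mul,
        Matrix.conjTranspose_mul, hgH, Matrix.conjTranspose_conjTranspose]
      simp only [Matrix.mul_assoc]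
    rw [Matrix.mul_inv_rev, hTinv, hTH]
    calc (Matrix.diagonal g * T'ᴴ * Matrix.diagonal g) * (Matrix.diagonal g * T' * Matrix.diagonal g)
        = Matrix.diagonal g * T'ᴴ * (Matrix.diagonal g * Matrix.diagonal g) * T' * Matrix.diagonal g := by
          simp only [Matrix.mul_assoc]
      _ = Matrix.diagonal g * (T'ᴴ * T') * Matrix.diagonal g := by
          rw [hgg, Matrix.mul_one]
          simp only [Matrix.mul_assoc]
  have hcp : (T'ᴴ * T')⁻¹.charpoly = (T'ᴴ * T').charpoly := by
    rw [hAinv]; exact charpoly_conj _ _ _ hgg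
  have hpoly : (∏ i, (X - C (ev i : ℂ))) = ∏ i, (X - C ((ev i : ℂ))⁻¹) := by
    rw [← herm_charpoly hA, ← hcp, herm_inv_charpoly hA hev_ne]
  have hmul := multiset_inv_eq ev hpoly
  -- sorted eigenvalues
  set μ : Fin (c+d) → ℝ := ev ∘ Tuple.sort ev with hμdef
  have hμmono : Monotone μ := Tuple.monotone_sort ev
  have hμpos : ∀ i, 0 < μ i := fun i => hev_pos _
  set ν : Fin (c+d) → ℝ := fun i => (μ i.rev)⁻¹ with hνdef
  have hνmono : Monotone ν := by
    intro i j hij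
    exact inv_anti₀ (hμpos _) (hμmono (Fin.rev_le_rev.mpr hij))
  have hmultμ : Multiset.map μ Finset.univ.val = Multiset.map ev Finset.univ.val :=
    multiset_map_perm ev (Tuple.sort ev)
  have hmultν : Multiset.map ν Finset.univ.val = Multiset.map μ Finset.univ.val := by
    calc Multiset.map ν Finset.univ.val
        = Multiset.map (((fun x : ℝ => x⁻¹) ∘ μ) ∘ (Fin.revPerm : Equiv.Perm (Fin (c+d)))) Finset.univ.val := rfl
      _ = Multiset.map ((fun x : ℝ => x⁻¹) ∘ μ) Finset.univ.val :=
          multiset_map_perm _ Fin.revPerm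
      _ = Multiset.map (fun x : ℝ => x⁻¹) (Multiset.map μ Finset.univ.val) :=
          (Multiset.map_map _ _ _).symm
      _ = Multiset.map (fun x : ℝ => x⁻¹) (Multiset.map ev Finset.univ.val) := by rw [hmultμ]
      _ = Multiset.map (fun i => (ev i)⁻¹) Finset.univ.val := Multiset.map_map _ _ _
      _ = Multiset.map ev Finset.univ.val := hmul.symm
      _ = Multiset.map μ Finset.univ.val := hmultμ.symm
  have hpair : ∀ i, μ i = (μ i.rev)⁻¹ := fun i =>
    congrFun (monotone_multiset_unique μ ν hμmono hνmono hmultν.symm) i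
  -- counting
  have hcard_d : Fintype.card {j : Fin (c+d) // ¬ (j:ℕ) < c} = d := by
    have e : {j : Fin (c+d) // ¬ (j:ℕ) < c} ≃ Fin d :=
      { toFun := fun j => ⟨(j.1 : ℕ) - c, by have := j.1.isLt; have := j.2; omega⟩
        invFun := fun k => ⟨⟨c + (k : ℕ), by have := k.isLt; omega⟩, by
          show ¬ c + (k : ℕ) < c
          omega⟩
        left_inv := fun j => Subtype.ext (Fin.ext (by have := j.2; simp; omega))
        right_inv := fun k => Fin.ext (by simp) }
    rw [Fintype.card_congr e, Fintype.card_fin]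
  have hcount : Fintype.card {j : Fin (c+d) // 1 < ev j} ≤ d := by
    have h := count_le T' g (fun j => rfl) hG
    rw [hcard_d] at h
    exact h
  have hcountμ : (Finset.univ.filter (fun i : Fin (c+d) => 1 < μ i)).card ≤ d := by
    have hcardeq : (Finset.univ.filter (fun i : Fin (c+d) => 1 < μ i)).card
        = (Finset.univ.filter (fun j : Fin (c+d) => 1 < ev j)).card := by
      apply Finset.card_bij' (fun a _ => Tuple.sort ev a) (fun b _ => (Tuple.sort ev).symm b)
      · intro a ha
        simp only [Finset.mem_filter, Finset.mem_univ, true_and] at ha ⊢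
        exact ha
      · intro b hb
        simp only [Finset.mem_filter, Finset.mem_univ, true_and] at hb ⊢
        simpa [hμdef, Function.comp, Equiv.apply_symm_apply] using hb
      · intro a _; exact Equiv.symm_apply_apply _ _
      · intro b _; exact Equiv.apply_symm_apply _ _
    rw [hcardeq, ← Fintype.card_subtype]
    exact hcount
  -- translate svS
  have hsv : ∀ i : Fin (c+d), svS T i = Real.sqrt (μ i.rev) := fun i => rfl
  constructor
  · intro i _
    rw [hsv, hsv, Fin.rev_rev, hpair i, Real.sqrt_inv]
  · intro i hd hc
    rw [hsv]
    have hkval : (i.rev : ℕ) = c + d - 1 - (i : ℕ) := by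
      rw [Fin.val_rev]; omega
    have hI := i.isLt
    rcases lt_trichotomy (μ i.rev) 1 with hlt | heq | hgt
    · exfalso
      have h1 : 1 < μ i.rev.rev := by
        rw [hpair i.rev.rev, Fin.rev_rev]
        exact one_lt_inv_iff₀.mpr ⟨hμpos _, hlt⟩
      have hsub : Finset.Ici i.rev.rev ⊆ Finset.univ.filter (fun j => 1 < μ j) := by
        intro j hj
        simp only [Finset.mem_filter, Finset.mem_univ, true_and]
        exact lt_of_lt_of_le h1 (hμmono (Finset.mem_Ici.mp hj))
      have hcard := (Finset.card_le_card hsub).trans hcountμ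
      rw [Fin.card_Ici, Fin.rev_rev] at hcard
      omega
    · rw [heq, Real.sqrt_one]
    · exfalso
      have hsub : Finset.Ici i.rev ⊆ Finset.univ.filter (fun j => 1 < μ j) := by
        intro j hj
        simp only [Finset.mem_filter, Finset.mem_univ, true_and]
        exact lt_of_lt_of_le hgt (hμmono (Finset.mem_Ici.mp hj))
      have hcard := (Finset.card_le_card hsub).trans hcountμ
      rw [Fin.card_Ici] at hcard
      omega


end
end

section
/- Let T = [[A, B], [C, D]] ∈ U(c,d) with c ≥ d and D the d×d lower-right block. Then for i = 1,...,d, the singular values satisfy σ_i(D) = (σ_i(T) + σ_i(T)^{-1})/2, where σ_i denotes the i-th largest singular value. -/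
open Matrix MeasureTheory Filter
open scoped ComplexOrder
noncomputable section

set_option maxHeartbeats 2000000

section MyHelpers
open Polynomial

variable {m n p : Type*} [Fintype m] [DecidableEq m] [Fintype n] [DecidableEq n]
  [Fintype p] [DecidableEq p]

lemma my_eval_charpoly (M : Matrix m m ℂ) (x : ℂ) :
    M.charpoly.eval x = (x • (1 : Matrix m m ℂ) - M).det := by
  rw [Matrix.eval_charpoly, Matrix.scalar_apply, smul_one_eq_diagonal]

lemma my_cp_comm (M : Matrix m n ℂ) (N : Matrix n m ℂ) :
    (M * N).charpoly * X ^ (Fintype.card n) = (N * M).charpoly * X ^ (Fintype.card m) := by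
  apply Polynomial.eq_of_infinite_eval_eq
  have hinf : {x : ℂ | x ≠ 0}.Infinite := by
    apply Set.infinite_of_finite_compl
    simp [Set.compl_setOf]
  apply hinf.mono
  intro x hx
  have hx : x ≠ 0 := hx
  simp only [Set.mem_setOf_eq, eval_mul, eval_pow, eval_X, my_eval_charpoly]
  have e1 : x • (1 : Matrix m m ℂ) - M * N = x • (1 + (-(x⁻¹ • M)) * N) := by
    rw [smul_add, Matrix.neg_mul, Matrix.smul_mul, smul_neg, smul_smul,
      mul_inv_cancel₀ hx, one_smul, ← sub_eq_add_neg]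
  have e2 : x • (1 : Matrix n n ℂ) - N * M = x • (1 + N * (-(x⁻¹ • M))) := by
    rw [smul_add, Matrix.mul_neg, Matrix.mul_smul, smul_neg, smul_smul,
      mul_inv_cancel₀ hx, one_smul, ← sub_eq_add_neg]
  rw [e1, e2, Matrix.det_smul, Matrix.det_smul, Matrix.det_one_add_mul_comm]
  ring

lemma my_cp_sq_comm (M N : Matrix m m ℂ) : (M * N).charpoly = (N * M).charpoly :=
  mul_right_cancel₀ (pow_ne_zero _ X_ne_zero) (my_cp_comm M N)

lemma my_cp_conj (U H : Matrix m m ℂ) (hU : U * Uᴴ = 1) :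
    (U * H * Uᴴ).charpoly = H.charpoly := by
  have hU' : Uᴴ * U = 1 := mul_eq_one_comm.mp hU
  calc (U * H * Uᴴ).charpoly = (U * (H * Uᴴ)).charpoly := by rw [Matrix.mul_assoc]
    _ = ((H * Uᴴ) * U).charpoly := my_cp_sq_comm _ _
    _ = H.charpoly := by rw [Matrix.mul_assoc, hU', Matrix.mul_one]

lemma my_cp_diagonal (v : m → ℂ) :
    (diagonal v).charpoly = ∏ i, (X - C (v i)) := by
  have : charmatrix (diagonal v) = diagonal (fun i => (X : ℂ[X]) - C (v i)) := by
    apply Matrix.ext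
    intro i j
    by_cases h : i = j
    · subst h; simp [charmatrix_apply_eq, diagonal_apply_eq]
    · simp [charmatrix_apply_ne _ _ _ h, diagonal_apply_ne _ h]
  rw [Matrix.charpoly, this, det_diagonal]

lemma my_cp_herm {H : Matrix m m ℂ} (hH : H.IsHermitian) :
    H.charpoly = ((Finset.univ.val.map hH.eigenvalues).map (fun a : ℝ => X - C (a : ℂ))).prod := by
  have hU : (hH.eigenvectorUnitary : Matrix m m ℂ) * (hH.eigenvectorUnitary : Matrix m m ℂ)ᴴ
      = 1 := by
    simpa [Matrix.star_eq_conjTranspose] using (Unitary.mem_iff.mp hH.eigenvectorUnitary.2).2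
  calc H.charpoly
      = ((hH.eigenvectorUnitary : Matrix m m ℂ) *
          diagonal (RCLike.ofReal ∘ hH.eigenvalues) *
          (hH.eigenvectorUnitary : Matrix m m ℂ)ᴴ).charpoly := by
        conv_lhs => rw [hH.spectral_theorem, Unitary.conjStarAlgAut_apply]
        rw [Matrix.star_eq_conjTranspose]
    _ = (diagonal (RCLike.ofReal ∘ hH.eigenvalues) : Matrix m m ℂ).charpoly := my_cp_conj _ _ hU
    _ = ∏ i, (X - C ((hH.eigenvalues i : ℝ) : ℂ)) := my_cp_diagonal _
    _ = _ := by
        rw [Finset.prod_eq_multiset_prod, Multiset.map_map]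
        rfl

lemma my_specM_eq {H : Matrix m m ℂ} (hH : H.IsHermitian) (s : Multiset ℝ)
    (h : H.charpoly = (s.map (fun a : ℝ => X - C (a : ℂ))).prod) :
    Finset.univ.val.map hH.eigenvalues = s := by
  have h1 := my_cp_herm hH
  rw [h] at h1
  have h2 := congrArg Polynomial.roots h1
  rw [show ∀ t : Multiset ℝ, t.map (fun a : ℝ => X - C (a : ℂ))
      = (t.map (fun a : ℝ => (a : ℂ))).map (fun a : ℂ => X - C a) from
      fun t => by rw [Multiset.map_map]; rfl] at h2
  rw [show ∀ t : Multiset ℝ, t.map (fun a : ℝ => X - C (a : ℂ))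
      = (t.map (fun a : ℝ => (a : ℂ))).map (fun a : ℂ => X - C a) from
      fun t => by rw [Multiset.map_map]; rfl] at h2
  rw [Polynomial.roots_multiset_prod_X_sub_C, Polynomial.roots_multiset_prod_X_sub_C] at h2
  exact Multiset.map_injective Complex.ofReal_injective h2.symm

lemma my_specM_of_conj_diag {H : Matrix m m ℂ} (hH : H.IsHermitian) (V : Matrix m m ℂ)
    (w : m → ℝ) (hV : V * Vᴴ = 1)
    (h : H = V * diagonal (fun i => (w i : ℂ)) * Vᴴ) :
    Finset.univ.val.map hH.eigenvalues = Finset.univ.val.map w := by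
  apply my_specM_eq
  rw [h, my_cp_conj _ _ hV, my_cp_diagonal, Finset.prod_eq_multiset_prod, Multiset.map_map]
  rfl

lemma my_specM_affine {H K : Matrix m m ℂ} (hH : H.IsHermitian) (hK : K.IsHermitian)
    (α β : ℝ) (hKeq : K = ((α : ℝ) : ℂ) • 1 + ((β : ℝ) : ℂ) • H) :
    Finset.univ.val.map hK.eigenvalues
      = (Finset.univ.val.map hH.eigenvalues).map (fun x => α + β * x) := by
  have hU : (hH.eigenvectorUnitary : Matrix m m ℂ) * (hH.eigenvectorUnitary : Matrix m m ℂ)ᴴ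
      = 1 := by
    simpa [Matrix.star_eq_conjTranspose] using (Unitary.mem_iff.mp hH.eigenvectorUnitary.2).2
  have hd : K = (hH.eigenvectorUnitary : Matrix m m ℂ) *
      diagonal (fun i => ((α + β * hH.eigenvalues i : ℝ) : ℂ)) *
      (hH.eigenvectorUnitary : Matrix m m ℂ)ᴴ := by
    have hdd : diagonal (fun i => ((α + β * hH.eigenvalues i : ℝ) : ℂ))
        = ((α : ℝ) : ℂ) • 1 + ((β : ℝ) : ℂ) • diagonal (RCLike.ofReal ∘ hH.eigenvalues) := by
      rw [smul_one_eq_diagonal, ← diagonal_smul, diagonal_add]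
      congr 1
      funext i
      simp only [Pi.smul_apply, Function.comp_apply, smul_eq_mul,
        show (RCLike.ofReal : ℝ → ℂ) = Complex.ofReal from rfl]
      push_cast
      ring
    rw [hdd]
    have hexp : ∀ P : Matrix m m ℂ,
        (hH.eigenvectorUnitary : Matrix m m ℂ) * (((α : ℝ) : ℂ) • 1 + ((β : ℝ) : ℂ) • P) *
          (hH.eigenvectorUnitary : Matrix m m ℂ)ᴴ
        = ((α : ℝ) : ℂ) • 1 + ((β : ℝ) : ℂ) •
            ((hH.eigenvectorUnitary : Matrix m m ℂ) * P *
              (hH.eigenvectorUnitary : Matrix m m ℂ)ᴴ) := by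
      intro P
      rw [Matrix.mul_add, Matrix.add_mul, Matrix.mul_smul, Matrix.mul_smul, Matrix.smul_mul,
        Matrix.smul_mul, Matrix.mul_one, hU]
    have hsp := hH.spectral_theorem
    rw [Unitary.conjStarAlgAut_apply] at hsp
    rw [hexp, ← Matrix.star_eq_conjTranspose, ← hsp, hKeq]
  have := my_specM_of_conj_diag hK _ _ hU hd
  rw [this, Multiset.map_map]
  rfl

lemma multiset_map_equiv_univ {α β : Type*} [Fintype α] [Fintype β] (e : α ≃ β) :
    Finset.univ.val.map e = Finset.univ.val := by
  have h := Finset.map_univ_equiv e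
  calc Finset.univ.val.map e = (Finset.univ.map e.toEmbedding).val := rfl
    _ = Finset.univ.val := by rw [h]

lemma multiset_map_comp_equiv {α β γ : Type*} [Fintype α] [Fintype β] (e : α ≃ β) (f : β → γ) :
    Finset.univ.val.map (f ∘ e) = Finset.univ.val.map f := by
  rw [← Multiset.map_map, multiset_map_equiv_univ]

def sdesc {N : ℕ} (v : Fin N → ℝ) : Fin N → ℝ := fun i => v (Tuple.sort v i.rev)

lemma sdesc_mem {N : ℕ} (v : Fin N → ℝ) (i : Fin N) : sdesc v i ∈ Finset.univ.val.map v :=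
  Multiset.mem_map.mpr ⟨_, Finset.mem_univ_val _, rfl⟩

lemma sdesc_antitone {N : ℕ} (v : Fin N → ℝ) : Antitone (sdesc v) := by
  intro i j hij
  exact Tuple.monotone_sort v (Fin.rev_le_rev.mpr hij)

lemma sdesc_multiset {N : ℕ} (v : Fin N → ℝ) :
    Finset.univ.val.map (sdesc v) = Finset.univ.val.map v := by
  have h1 := multiset_map_comp_equiv (Fin.revPerm : Equiv.Perm (Fin N))
    (v ∘ (Tuple.sort v : Equiv.Perm (Fin N)))
  have h2 := multiset_map_comp_equiv ((Tuple.sort v : Equiv.Perm (Fin N))) v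
  exact (h1.trans h2 : _)

lemma antitone_eq_of_multiset {N : ℕ} {u w : Fin N → ℝ} (hu : Antitone u) (hw : Antitone w)
    (h : Finset.univ.val.map u = Finset.univ.val.map w) : u = w := by
  have hperm : List.Perm (List.ofFn u) (List.ofFn w) := by
    rw [← Multiset.coe_eq_coe]
    have e1 : (↑(List.ofFn u) : Multiset ℝ) = Finset.univ.val.map u := by
      rw [List.ofFn_eq_map]; rfl
    have e2 : (↑(List.ofFn w) : Multiset ℝ) = Finset.univ.val.map w := by
      rw [List.ofFn_eq_map]; rfl
    rw [e1, e2, h]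
  have hsu : (List.ofFn u).Pairwise (· ≥ ·) := by
    rw [List.pairwise_ofFn]
    intro i j hij
    exact hu (le_of_lt hij)
  have hsw : (List.ofFn w).Pairwise (· ≥ ·) := by
    rw [List.pairwise_ofFn]
    intro i j hij
    exact hw (le_of_lt hij)
  exact List.ofFn_injective (List.Perm.eq_of_pairwise' hsu hsw hperm)

lemma my_f_mono {x y : ℝ} (hy : 1 ≤ y) (hxy : y ≤ x) : y + y⁻¹ ≤ x + x⁻¹ := by
  have hy0 : 0 < y := lt_of_lt_of_le one_pos hy
  have hx0 : 0 < x := lt_of_lt_of_le hy0 hxy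
  have key : y⁻¹ - x⁻¹ ≤ x - y := by
    rw [inv_sub_inv hy0.ne' hx0.ne']
    exact div_le_self (by linarith) (by nlinarith)
  linarith

end MyHelpers

section MoreHelpers
open Polynomial Matrix

lemma my_univ_val_sum (α β : Type*) [Fintype α] [Fintype β] :
    (Finset.univ : Finset (α ⊕ β)).val
      = Finset.univ.val.map Sum.inl + Finset.univ.val.map Sum.inr := by
  rw [← Finset.univ_disjSum_univ, Finset.val_disjSum]
  rfl

lemma my_prod_ne_zero (t : Multiset ℝ) :
    (t.map fun a : ℝ => X - C (a : ℂ)).prod ≠ 0 := by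
  apply Polynomial.Monic.ne_zero
  apply Polynomial.monic_multiset_prod_of_monic
  intro a _
  exact Polynomial.monic_X_sub_C _

lemma my_roots_prod_mul_pow (t : Multiset ℝ) (k : ℕ) :
    ((t.map fun a : ℝ => X - C (a : ℂ)).prod * X ^ k).roots
      = t.map (fun a : ℝ => (a : ℂ)) + Multiset.replicate k 0 := by
  rw [Polynomial.roots_mul (mul_ne_zero (my_prod_ne_zero t) (pow_ne_zero _ X_ne_zero)),
    Polynomial.roots_pow, Polynomial.roots_X,
    show t.map (fun a : ℝ => X - C (a : ℂ))
      = (t.map (fun a : ℝ => (a : ℂ))).map (fun a : ℂ => X - C a) from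
      by rw [Multiset.map_map]; rfl,
    Polynomial.roots_multiset_prod_X_sub_C]
  congr 1
  rw [Multiset.nsmul_singleton]

/-- Rectangular `AB` vs `BA`: spectra agree up to zero padding. -/
lemma my_spec_rect {p q : ℕ} (hpq : q ≤ p) (C : Matrix (Fin q) (Fin p) ℂ) :
    Finset.univ.val.map (Matrix.isHermitian_conjTranspose_mul_self C).eigenvalues
      = Finset.univ.val.map (Matrix.isHermitian_mul_conjTranspose_self C).eigenvalues
        + Multiset.replicate (p - q) 0 := by
  have hcp := my_cp_comm Cᴴ C
  rw [my_cp_herm (Matrix.isHermitian_conjTranspose_mul_self C),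
    my_cp_herm (Matrix.isHermitian_mul_conjTranspose_self C), Fintype.card_fin,
    Fintype.card_fin] at hcp
  have hroots := congrArg Polynomial.roots hcp
  rw [my_roots_prod_mul_pow, my_roots_prod_mul_pow] at hroots
  have hrep : Multiset.replicate p (0 : ℂ)
      = Multiset.replicate (p - q) (0 : ℂ) + Multiset.replicate q 0 := by
    rw [← Multiset.replicate_add]
    congr 1
    omega
  rw [hrep] at hroots
  have h2 : (Finset.univ.val.map (Matrix.isHermitian_conjTranspose_mul_self C).eigenvalues).map
        (fun a : ℝ => (a : ℂ)) + Multiset.replicate q 0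
      = ((Finset.univ.val.map (Matrix.isHermitian_mul_conjTranspose_self C).eigenvalues).map
          (fun a : ℝ => (a : ℂ)) + Multiset.replicate (p - q) 0) + Multiset.replicate q 0 := by
    rw [hroots]
    ac_rfl
  have h3 := add_right_cancel h2
  apply Multiset.map_injective Complex.ofReal_injective
  rw [Multiset.map_add, h3, Multiset.map_replicate]
  norm_num

end MoreHelpers


/-- For `T = [[A,B],[C,D]] ∈ U(c,d)` with `c ≥ d`, the singular values of the corner
block satisfy `σ_i(D) = (σ_i(T) + σ_i(T)⁻¹)/2` for `i = 1, …, d`. -/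
theorem stmt5 (c d : ℕ) (hcd : d ≤ c) (A : Matrix (Fin c) (Fin c) ℂ)
    (B : Matrix (Fin c) (Fin d) ℂ) (C : Matrix (Fin d) (Fin c) ℂ) (D : Matrix (Fin d) (Fin d) ℂ)
    (hT : Matrix.fromBlocks A B C D ∈ pseudoU c d) :
    ∀ i : Fin d,
      sv D i =
        (svS (Matrix.fromBlocks A B C D) (Fin.castLE (Nat.le_add_left d c) i) +
          (svS (Matrix.fromBlocks A B C D) (Fin.castLE (Nat.le_add_left d c) i))⁻¹) / 2 := by
  intro i
  classical
  have hT' : (Matrix.fromBlocks A B C D)ᴴ * Gcd c d * (Matrix.fromBlocks A B C D) = Gcd c d := hT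
  set T : Matrix (Fin c ⊕ Fin d) (Fin c ⊕ Fin d) ℂ := Matrix.fromBlocks A B C D with hTdef
  set G : Matrix (Fin c ⊕ Fin d) (Fin c ⊕ Fin d) ℂ := Gcd c d with hGdef
  have hG : G = Matrix.fromBlocks 1 0 0 (-1) := rfl
  have hGG : G * G = 1 := by
    rw [hG, Matrix.fromBlocks_multiply]
    simp [← Matrix.fromBlocks_one]
  have hGH : Gᴴ = G := by
    rw [hG, Matrix.fromBlocks_conjTranspose]
    simp
  -- block relations from hT'
  have key := hT'
  rw [hTdef] at key
  rw [Matrix.fromBlocks_conjTranspose] at key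
  rw [show G = Matrix.fromBlocks 1 0 0 (-1) from hG] at key
  rw [Matrix.fromBlocks_multiply, Matrix.fromBlocks_multiply] at key
  simp only [Matrix.mul_one, Matrix.mul_zero, Matrix.zero_mul, Matrix.mul_neg, Matrix.neg_mul,
    add_zero, zero_add] at key
  rw [Matrix.fromBlocks_inj] at key
  obtain ⟨e11, e12, e21, e22⟩ := key
  have hAA : Aᴴ * A = 1 + Cᴴ * C := by
    have := e11
    rw [← this]; abel
  have hBB : Bᴴ * B = -1 + Dᴴ * D := by
    rw [← e22]; abel
  have hTinv : (G * Tᴴ * G) * T = 1 := by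
    calc (G * Tᴴ * G) * T = G * (Tᴴ * G * T) := by
          simp only [Matrix.mul_assoc]
      _ = 1 := by rw [hT', hGG]
  have hTG : T * (G * Tᴴ * G) = 1 := mul_eq_one_comm.mp hTinv
  have hGT' : T * G * Tᴴ = G := by
    have h2 : T * (G * Tᴴ * G) * G = G := by rw [hTG, Matrix.one_mul]
    calc T * G * Tᴴ = T * (G * Tᴴ * G) * G := by
          simp only [Matrix.mul_assoc, hGG, Matrix.mul_one]
      _ = G := h2
  have key2 := hGT'
  rw [hTdef] at key2
  rw [Matrix.fromBlocks_conjTranspose] at key2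
  rw [show G = Matrix.fromBlocks 1 0 0 (-1) from hG] at key2
  rw [Matrix.fromBlocks_multiply, Matrix.fromBlocks_multiply] at key2
  simp only [Matrix.mul_one, Matrix.mul_zero, Matrix.zero_mul, Matrix.mul_neg, Matrix.neg_mul,
    add_zero, zero_add] at key2
  rw [Matrix.fromBlocks_inj] at key2
  obtain ⟨f11, f12, f21, f22⟩ := key2
  have hCC : C * Cᴴ = ((-1 : ℝ) : ℂ) • 1 + ((1 : ℝ) : ℂ) • (D * Dᴴ) := by
    have h9 : C * Cᴴ = -1 + D * Dᴴ := by rw [← f22]; abel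
    rw [h9]
    push_cast
    module
  -- S, X, M
  set S : Matrix (Fin c ⊕ Fin d) (Fin c ⊕ Fin d) ℂ := Tᴴ * T with hSdef
  have hS : S.IsHermitian := Matrix.isHermitian_conjTranspose_mul_self T
  set Xm : Matrix (Fin c ⊕ Fin d) (Fin c ⊕ Fin d) ℂ := G * S * G with hXdef
  have hSX : S * Xm = 1 := by
    have step : S * Xm = Tᴴ * (T * G * Tᴴ) * (T * G) := by
      rw [hSdef, hXdef, hSdef]
      noncomm_ring
    rw [step, hGT']
    calc Tᴴ * G * (T * G) = (Tᴴ * G * T) * G := by noncomm_ring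
      _ = 1 := by rw [hT', hGG]
  have hXherm : Xm.IsHermitian := by
    show Xmᴴ = Xm
    rw [hXdef, Matrix.conjTranspose_mul, Matrix.conjTranspose_mul, hGH, hS.eq]
    noncomm_ring
  set Mm : Matrix (Fin c ⊕ Fin d) (Fin c ⊕ Fin d) ℂ := S + Xm with hMdef
  have hM : Mm.IsHermitian := hS.add hXherm
  set H₁ : Matrix (Fin c) (Fin c) ℂ := ((2 : ℝ) : ℂ) • 1 + ((4 : ℝ) : ℂ) • (Cᴴ * C) with hH1def
  set H₂ : Matrix (Fin d) (Fin d) ℂ := ((-2 : ℝ) : ℂ) • 1 + ((4 : ℝ) : ℂ) • (Dᴴ * D) with hH2def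
  have hSblock : S = Matrix.fromBlocks (Aᴴ * A + Cᴴ * C) (Aᴴ * B + Cᴴ * D)
      (Bᴴ * A + Dᴴ * C) (Bᴴ * B + Dᴴ * D) := by
    rw [hSdef, hTdef, Matrix.fromBlocks_conjTranspose, Matrix.fromBlocks_multiply]
  have hXblock : Xm = Matrix.fromBlocks (Aᴴ * A + Cᴴ * C) (-(Aᴴ * B + Cᴴ * D))
      (-(Bᴴ * A + Dᴴ * C)) (Bᴴ * B + Dᴴ * D) := by
    rw [hXdef, hSblock, show G = Matrix.fromBlocks 1 0 0 (-1) from hG,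
      Matrix.fromBlocks_multiply, Matrix.fromBlocks_multiply]
    simp only [Matrix.mul_one, Matrix.mul_zero, Matrix.zero_mul, Matrix.mul_neg, Matrix.neg_mul,
      Matrix.one_mul, add_zero, zero_add, neg_neg, neg_add]
    try (rw [Matrix.fromBlocks_inj]; exact ⟨by abel, by abel, by abel, by abel⟩)
  have hMblock : Mm = Matrix.fromBlocks H₁ 0 0 H₂ := by
    rw [hMdef, hSblock, hXblock, Matrix.fromBlocks_add, Matrix.fromBlocks_inj]
    refine ⟨?_, by abel, by abel, ?_⟩
    · rw [hAA, hH1def]; push_cast; module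
    · rw [hBB, hH2def]; push_cast; module
  have hH1 : H₁.IsHermitian := by
    have h1 : ((Cᴴ * C)ᴴ : Matrix (Fin c) (Fin c) ℂ) = Cᴴ * C :=
      Matrix.isHermitian_conjTranspose_mul_self C
    show H₁ᴴ = H₁
    rw [hH1def, Matrix.conjTranspose_add, Matrix.conjTranspose_smul, Matrix.conjTranspose_smul,
      Matrix.conjTranspose_one, h1]
    norm_num
  have hH2 : H₂.IsHermitian := by
    have h1 : ((Dᴴ * D)ᴴ : Matrix (Fin d) (Fin d) ℂ) = Dᴴ * D :=
      Matrix.isHermitian_conjTranspose_mul_self D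
    show H₂ᴴ = H₂
    rw [hH2def, Matrix.conjTranspose_add, Matrix.conjTranspose_smul, Matrix.conjTranspose_smul,
      Matrix.conjTranspose_one, h1]
    norm_num
  -- eigenvalue multisets
  set qM : Multiset ℝ := Finset.univ.val.map (Matrix.isHermitian_conjTranspose_mul_self D).eigenvalues
    with hqMdef
  set lM : Multiset ℝ := Finset.univ.val.map hS.eigenvalues with hlMdef
  have hdetT : T.det ≠ 0 := by
    have h := congrArg Matrix.det hTinv
    rw [Matrix.det_mul, Matrix.det_one] at h
    exact right_ne_zero_of_mul_eq_one h
  have hdetS : S.det ≠ 0 := by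
    rw [hSdef, Matrix.det_mul, Matrix.det_conjTranspose]
    exact mul_ne_zero (star_ne_zero.mpr hdetT) hdetT
  have evnz : ∀ j, hS.eigenvalues j ≠ 0 := by
    intro j
    rw [hS.det_eq_prod_eigenvalues] at hdetS
    have h := Finset.prod_ne_zero_iff.mp hdetS j (Finset.mem_univ j)
    intro hzero
    apply h
    rw [hzero]
    norm_num
  have evpos : ∀ j, 0 < hS.eigenvalues j := by
    intro j
    rcases lt_or_eq_of_le (Matrix.eigenvalues_conjTranspose_mul_self_nonneg T j) with h | h
    · exact h
    · exact absurd h.symm (evnz j)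
  set U : Matrix (Fin c ⊕ Fin d) (Fin c ⊕ Fin d) ℂ :=
    (hS.eigenvectorUnitary : Matrix (Fin c ⊕ Fin d) (Fin c ⊕ Fin d) ℂ) with hUdef
  have hUU : U * Uᴴ = 1 := by
    simpa [Matrix.star_eq_conjTranspose] using (Unitary.mem_iff.mp hS.eigenvectorUnitary.2).2
  have hSpec : S = U * Matrix.diagonal (fun j => ((hS.eigenvalues j : ℝ) : ℂ)) * Uᴴ := by
    conv_lhs => rw [hS.spectral_theorem, Unitary.conjStarAlgAut_apply]
    rw [Matrix.star_eq_conjTranspose]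
    rfl
  set Y : Matrix (Fin c ⊕ Fin d) (Fin c ⊕ Fin d) ℂ :=
    U * Matrix.diagonal (fun j => (((hS.eigenvalues j)⁻¹ : ℝ) : ℂ)) * Uᴴ with hYdef
  have hdiagmul : Matrix.diagonal (fun j : Fin c ⊕ Fin d => ((hS.eigenvalues j : ℝ) : ℂ)) *
      Matrix.diagonal (fun j => (((hS.eigenvalues j)⁻¹ : ℝ) : ℂ)) = 1 := by
    rw [Matrix.diagonal_mul_diagonal]
    have hfun : (fun j : Fin c ⊕ Fin d => ((hS.eigenvalues j : ℝ) : ℂ) *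
        (((hS.eigenvalues j)⁻¹ : ℝ) : ℂ)) = fun _ => 1 := by
      funext j
      push_cast
      exact mul_inv_cancel₀ (by exact_mod_cast evnz j)
    rw [hfun, Matrix.diagonal_one]
  have hSY : S * Y = 1 := by
    rw [hSpec, hYdef]
    calc U * Matrix.diagonal (fun j => ((hS.eigenvalues j : ℝ) : ℂ)) * Uᴴ *
          (U * Matrix.diagonal (fun j => (((hS.eigenvalues j)⁻¹ : ℝ) : ℂ)) * Uᴴ)
        = U * (Matrix.diagonal (fun j => ((hS.eigenvalues j : ℝ) : ℂ)) * ((Uᴴ * U) *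
            Matrix.diagonal (fun j => (((hS.eigenvalues j)⁻¹ : ℝ) : ℂ)))) * Uᴴ := by
          noncomm_ring
      _ = 1 := by
          rw [mul_eq_one_comm.mp hUU, Matrix.one_mul, hdiagmul, Matrix.mul_one, hUU]
  have hYS : Y * S = 1 := mul_eq_one_comm.mp hSY
  have hXY : Xm = Y := by
    calc Xm = (Y * S) * Xm := by rw [hYS, Matrix.one_mul]
      _ = Y * (S * Xm) := by rw [Matrix.mul_assoc]
      _ = Y := by rw [hSX, Matrix.mul_one]
  -- step1
  have step1 : Finset.univ.val.map hM.eigenvalues = lM.map (fun x => x + x⁻¹) := by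
    have hMdiag : Mm = U * Matrix.diagonal
        (fun j => ((hS.eigenvalues j + (hS.eigenvalues j)⁻¹ : ℝ) : ℂ)) * Uᴴ := by
      have hdsplit : Matrix.diagonal
          (fun j : Fin c ⊕ Fin d => ((hS.eigenvalues j + (hS.eigenvalues j)⁻¹ : ℝ) : ℂ))
          = Matrix.diagonal (fun j => ((hS.eigenvalues j : ℝ) : ℂ))
            + Matrix.diagonal (fun j => (((hS.eigenvalues j)⁻¹ : ℝ) : ℂ)) := by
        rw [Matrix.diagonal_add]
        congr 1
        funext j
        push_cast
        ring
      rw [hMdef, hXY, hdsplit, Matrix.mul_add, Matrix.add_mul, ← hSpec, ← hYdef]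
    rw [my_specM_of_conj_diag hM U _ hUU hMdiag, hlMdef, Multiset.map_map]
    rfl
  -- inversion symmetry
  have hlMinv : lM.map (fun x => x⁻¹) = lM := by
    have specX1 : Finset.univ.val.map hXherm.eigenvalues
        = Finset.univ.val.map (fun j => (hS.eigenvalues j)⁻¹) := by
      apply my_specM_of_conj_diag hXherm U _ hUU
      rw [hXY, hYdef]
    have hGUU : (G * U) * (G * U)ᴴ = 1 := by
      rw [Matrix.conjTranspose_mul, hGH]
      calc G * U * (Uᴴ * G) = G * (U * Uᴴ) * G := by noncomm_ring
        _ = 1 := by rw [hUU, Matrix.mul_one, hGG]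
    have specX2 : Finset.univ.val.map hXherm.eigenvalues = lM := by
      have hh : Xm = (G * U) * Matrix.diagonal (fun j => ((hS.eigenvalues j : ℝ) : ℂ)) *
          (G * U)ᴴ := by
        rw [Matrix.conjTranspose_mul, hGH, hXdef]
        conv_lhs => rw [hSpec]
        noncomm_ring
      rw [my_specM_of_conj_diag hXherm (G * U) _ hGUU hh, hlMdef]
    calc lM.map (fun x => x⁻¹)
        = Finset.univ.val.map (fun j => (hS.eigenvalues j)⁻¹) := by
          rw [hlMdef, Multiset.map_map]; rfl
      _ = lM := specX1.symm.trans specX2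
  -- step2
  have qMspec : Finset.univ.val.map (Matrix.isHermitian_mul_conjTranspose_self D).eigenvalues
      = qM := by
    apply my_specM_eq
    rw [my_cp_sq_comm D Dᴴ]
    exact my_cp_herm (Matrix.isHermitian_conjTranspose_mul_self D)
  have hCCspec : Finset.univ.val.map (Matrix.isHermitian_mul_conjTranspose_self C).eigenvalues
      = qM.map (fun x => -1 + 1 * x) := by
    rw [← qMspec]
    exact my_specM_affine (Matrix.isHermitian_mul_conjTranspose_self D)
      (Matrix.isHermitian_mul_conjTranspose_self C) (-1) 1 hCC
  have hCHCspec : Finset.univ.val.map (Matrix.isHermitian_conjTranspose_mul_self C).eigenvalues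
      = qM.map (fun x => -1 + 1 * x) + Multiset.replicate (c - d) 0 := by
    rw [my_spec_rect hcd C, hCCspec]
  have hH1spec : Finset.univ.val.map hH1.eigenvalues
      = qM.map (fun x => 4 * x - 2) + Multiset.replicate (c - d) 2 := by
    rw [my_specM_affine (Matrix.isHermitian_conjTranspose_mul_self C) hH1 2 4 hH1def, hCHCspec,
      Multiset.map_add, Multiset.map_map, Multiset.map_replicate]
    congr 1
    · congr 1
      funext x
      simp only [Function.comp_apply]
      ring
    · norm_num
  have hH2spec : Finset.univ.val.map hH2.eigenvalues = qM.map (fun x => 4 * x - 2) := by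
    rw [my_specM_affine (Matrix.isHermitian_conjTranspose_mul_self D) hH2 (-2) 4 hH2def]
    congr 1
    funext x
    ring
  have step2 : Finset.univ.val.map hM.eigenvalues
      = (qM.map (fun x => 4 * x - 2) + Multiset.replicate (c - d) 2)
        + qM.map (fun x => 4 * x - 2) := by
    apply my_specM_eq
    have hcp : Mm.charpoly = H₁.charpoly * H₂.charpoly := by
      rw [hMblock, Matrix.charpoly_fromBlocks_zero₁₂]
    rw [hcp, my_cp_herm hH1, my_cp_herm hH2, hH1spec, hH2spec]
    simp only [Multiset.map_add, Multiset.prod_add]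
    try ring
  -- eigenvalue bounds
  have hq1M : ∀ x ∈ qM, (1 : ℝ) ≤ x := by
    have hDDaff : Dᴴ * D = ((1 : ℝ) : ℂ) • 1 + ((1 : ℝ) : ℂ) • (Bᴴ * B) := by
      rw [hBB]
      push_cast
      module
    have hq := my_specM_affine (Matrix.isHermitian_conjTranspose_mul_self B)
      (Matrix.isHermitian_conjTranspose_mul_self D) 1 1 hDDaff
    intro x hx
    rw [hqMdef] at hx
    rw [hq] at hx
    obtain ⟨y, hy, rfl⟩ := Multiset.mem_map.mp hx
    obtain ⟨j, _, rfl⟩ := Multiset.mem_map.mp hy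
    have := Matrix.eigenvalues_conjTranspose_mul_self_nonneg B j
    linarith
  have hlMpos : ∀ x ∈ lM, (0 : ℝ) < x := by
    intro x hx
    rw [hlMdef] at hx
    obtain ⟨j, _, rfl⟩ := Multiset.mem_map.mp hx
    exact evpos j
  -- sorted side
  set T₀ : Matrix (Fin (c + d)) (Fin (c + d)) ℂ :=
    T.submatrix finSumFinEquiv.symm finSumFinEquiv.symm with hT₀def
  have hS₀ : (T₀ᴴ * T₀).IsHermitian := Matrix.isHermitian_conjTranspose_mul_self T₀
  have hspecS₀ : Finset.univ.val.map hS₀.eigenvalues = lM := by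
    apply my_specM_eq
    have hre : T₀ᴴ * T₀ = (Matrix.reindex finSumFinEquiv finSumFinEquiv) S := by
      rw [Matrix.reindex_apply, hSdef, hT₀def, Matrix.conjTranspose_submatrix,
        Matrix.submatrix_mul_equiv]
    rw [hre, Matrix.charpoly_reindex, my_cp_herm hS]
  set Λ : Fin (c + d) → ℝ := sdesc hS₀.eigenvalues with hΛdef
  have hΛanti : Antitone Λ := sdesc_antitone hS₀.eigenvalues
  have hΛmult : Finset.univ.val.map Λ = lM := (sdesc_multiset _).trans hspecS₀
  have hΛpos : ∀ k, 0 < Λ k := by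
    intro k
    apply hlMpos
    rw [← hspecS₀]
    exact sdesc_mem _ k
  set qv : Fin d → ℝ := sdesc (Matrix.isHermitian_conjTranspose_mul_self D).eigenvalues with hqvdef
  have hqanti : Antitone qv := sdesc_antitone _
  have hqmult : Finset.univ.val.map qv = qM := sdesc_multiset _
  have hq1 : ∀ k, 1 ≤ qv k := fun k => hq1M _ (sdesc_mem _ k)
  -- pairing
  have hpairfun : (fun k : Fin (c + d) => (Λ k.rev)⁻¹) = Λ := by
    apply antitone_eq_of_multiset
    · intro k l hkl
      exact inv_anti₀ (hΛpos k.rev) (hΛanti (Fin.rev_le_rev.mpr hkl))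
    · exact hΛanti
    · have hrev := multiset_map_comp_equiv (Fin.revPerm : Equiv.Perm (Fin (c + d))) Λ
      calc Finset.univ.val.map (fun k : Fin (c + d) => (Λ k.rev)⁻¹)
          = (Finset.univ.val.map (Λ ∘ (Fin.revPerm : Equiv.Perm (Fin (c + d))))).map
              (fun x => x⁻¹) := by rw [Multiset.map_map]; rfl
        _ = lM.map (fun x => x⁻¹) := by rw [hrev, hΛmult]
        _ = lM := hlMinv
        _ = Finset.univ.val.map Λ := hΛmult.symm
  have hpair : ∀ k : Fin (c + d), Λ k.rev = (Λ k)⁻¹ := by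
    intro k
    have h := congrFun hpairfun k
    rw [← h, inv_inv]
  have hΛ1 : ∀ k : Fin (c + d), 2 * (k : ℕ) < c + d → 1 ≤ Λ k := by
    intro k hk
    have hrev : k ≤ k.rev := by
      rw [Fin.le_def, Fin.val_rev]
      omega
    have h1 : Λ k.rev ≤ Λ k := hΛanti hrev
    rw [hpair k] at h1
    have hp := hΛpos k
    nlinarith [mul_inv_cancel₀ hp.ne']
  -- the two antitone tuples
  have hhalf : ∀ k : Fin (c + d), (k : ℕ) / 2 < c + d :=
    fun k => lt_of_le_of_lt (Nat.div_le_self _ _) k.isLt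
  have hhalf2 : ∀ k : Fin (c + d), 2 * ((k : ℕ) / 2) < c + d := by
    intro k
    have := k.isLt
    omega
  have hkey : (fun k : Fin (c + d) => Λ ⟨(k : ℕ) / 2, hhalf k⟩ + (Λ ⟨(k : ℕ) / 2, hhalf k⟩)⁻¹)
      = (fun k : Fin (c + d) =>
          if h : (k : ℕ) < 2 * d then 4 * qv ⟨(k : ℕ) / 2, by omega⟩ - 2 else 2) := by
    apply antitone_eq_of_multiset
    · intro k l hkl
      have hkl' : (k : ℕ) / 2 ≤ (l : ℕ) / 2 := Nat.div_le_div_right hkl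
      exact my_f_mono (hΛ1 _ (hhalf2 l)) (hΛanti (by exact hkl'))
    · intro k l hkl
      have hkl' : (k : ℕ) ≤ (l : ℕ) := hkl
      dsimp only
      by_cases hl : (l : ℕ) < 2 * d
      · have hk : (k : ℕ) < 2 * d := by omega
        rw [dif_pos hl, dif_pos hk]
        have hdiv : (k : ℕ) / 2 ≤ (l : ℕ) / 2 := Nat.div_le_div_right hkl'
        have := hqanti (show (⟨(k : ℕ) / 2, by omega⟩ : Fin d) ≤ ⟨(l : ℕ) / 2, by omega⟩ from hdiv)
        linarith
      · rw [dif_neg hl]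
        by_cases hk : (k : ℕ) < 2 * d
        · rw [dif_pos hk]
          have := hq1 ⟨(k : ℕ) / 2, by omega⟩
          linarith
        · rw [dif_neg hk]
    · -- multiset equality
      have hwmult : Finset.univ.val.map
          (fun k : Fin (c + d) => Λ ⟨(k : ℕ) / 2, hhalf k⟩ + (Λ ⟨(k : ℕ) / 2, hhalf k⟩)⁻¹)
          = lM.map (fun x => x + x⁻¹) := by
        set φ : Fin (c + d) → Fin (c + d) := fun k =>
          if (k : ℕ) % 2 = 0 then ⟨(k : ℕ) / 2, hhalf k⟩
          else Fin.rev ⟨(k : ℕ) / 2, hhalf k⟩ with hφdef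
        have hφval : ∀ k : Fin (c + d), ((φ k : Fin (c + d)) : ℕ)
            = if (k : ℕ) % 2 = 0 then (k : ℕ) / 2 else c + d - ((k : ℕ) / 2 + 1) := by
          intro k
          simp only [hφdef]
          by_cases hk : (k : ℕ) % 2 = 0
          · rw [if_pos hk, if_pos hk]
          · rw [if_neg hk, if_neg hk, Fin.val_rev]
        have hφinj : Function.Injective φ := by
          intro a b hab
          have hval := congrArg Fin.val hab
          rw [hφval a, hφval b] at hval
          have ha := a.isLt
          have hb := b.isLt
          apply Fin.ext
          by_cases h1 : (a : ℕ) % 2 = 0 <;> by_cases h2 : (b : ℕ) % 2 = 0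
          · rw [if_pos h1, if_pos h2] at hval; omega
          · rw [if_pos h1, if_neg h2] at hval; omega
          · rw [if_neg h1, if_pos h2] at hval; omega
          · rw [if_neg h1, if_neg h2] at hval; omega
        have hφbij : Function.Bijective φ := Finite.injective_iff_bijective.mp hφinj
        have hcomp := multiset_map_comp_equiv (Equiv.ofBijective φ hφbij)
          (fun j : Fin (c + d) => Λ j + (Λ j)⁻¹)
        have hptwise : ((fun j : Fin (c + d) => Λ j + (Λ j)⁻¹) ∘ (Equiv.ofBijective φ hφbij))
            = (fun k : Fin (c + d) =>
                Λ ⟨(k : ℕ) / 2, hhalf k⟩ + (Λ ⟨(k : ℕ) / 2, hhalf k⟩)⁻¹) := by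
          funext k
          have hco : (Equiv.ofBijective φ hφbij) k = φ k := rfl
          simp only [Function.comp_apply]
          rw [hco]
          simp only [hφdef]
          by_cases hk : (k : ℕ) % 2 = 0
          · rw [if_pos hk]
          · rw [if_neg hk, hpair ⟨(k : ℕ) / 2, hhalf k⟩, inv_inv, add_comm]
        rw [hptwise] at hcomp
        rw [hcomp, ← hΛmult, Multiset.map_map]
        rfl
      have humult : Finset.univ.val.map
          (fun k : Fin (c + d) =>
            if h : (k : ℕ) < 2 * d then 4 * qv ⟨(k : ℕ) / 2, by omega⟩ - 2 else 2)
          = (qM.map (fun x => 4 * x - 2) + Multiset.replicate (c - d) 2)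
            + qM.map (fun x => 4 * x - 2) := by
        set u : Fin (c + d) → ℝ := fun k =>
          if h : (k : ℕ) < 2 * d then 4 * qv ⟨(k : ℕ) / 2, by omega⟩ - 2 else 2 with hudef
        set ψ : (Fin d ⊕ Fin d) ⊕ Fin (c - d) → Fin (c + d) :=
          Sum.elim (Sum.elim (fun j => ⟨2 * (j : ℕ), by have := j.isLt; omega⟩)
            (fun j => ⟨2 * (j : ℕ) + 1, by have := j.isLt; omega⟩))
            (fun j => ⟨2 * d + (j : ℕ), by have := j.isLt; omega⟩) with hψdef
        have hψval1 : ∀ j : Fin d, ((ψ (Sum.inl (Sum.inl j)) : Fin (c + d)) : ℕ) = 2 * (j : ℕ) :=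
          fun j => rfl
        have hψval2 : ∀ j : Fin d, ((ψ (Sum.inl (Sum.inr j)) : Fin (c + d)) : ℕ)
            = 2 * (j : ℕ) + 1 := fun j => rfl
        have hψval3 : ∀ j : Fin (c - d), ((ψ (Sum.inr j) : Fin (c + d)) : ℕ) = 2 * d + (j : ℕ) :=
          fun j => rfl
        have hψinj : Function.Injective ψ := by
          rintro ((x | x) | x) ((y | y) | y) hab <;>
            have hval := congrArg Fin.val hab <;>
            have hx := x.isLt <;> have hy := y.isLt
          · rw [hψval1, hψval1] at hval
            rw [show x = y from Fin.ext (by omega)]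
          · rw [hψval1, hψval2] at hval; omega
          · rw [hψval1, hψval3] at hval; omega
          · rw [hψval2, hψval1] at hval; omega
          · rw [hψval2, hψval2] at hval
            rw [show x = y from Fin.ext (by omega)]
          · rw [hψval2, hψval3] at hval; omega
          · rw [hψval3, hψval1] at hval; omega
          · rw [hψval3, hψval2] at hval; omega
          · rw [hψval3, hψval3] at hval
            rw [show x = y from Fin.ext (by omega)]
        have hψbij : Function.Bijective ψ := by
          rw [Fintype.bijective_iff_injective_and_card]
          refine ⟨hψinj, ?_⟩
          simp only [Fintype.card_sum, Fintype.card_fin]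
          omega
        have hcomp := multiset_map_comp_equiv (Equiv.ofBijective ψ hψbij) u
        have hdecomp : (Finset.univ : Finset ((Fin d ⊕ Fin d) ⊕ Fin (c - d))).val
            = ((Finset.univ.val.map Sum.inl).map Sum.inl + (Finset.univ.val.map Sum.inr).map Sum.inl)
              + Finset.univ.val.map Sum.inr := by
          rw [my_univ_val_sum (Fin d ⊕ Fin d) (Fin (c - d)), my_univ_val_sum (Fin d) (Fin d)]
          rw [Multiset.map_add]
        have hueval : ∀ (kk : Fin (c + d)) (j : Fin d),
            (kk : ℕ) = 2 * (j : ℕ) ∨ (kk : ℕ) = 2 * (j : ℕ) + 1 → u kk = 4 * qv j - 2 := by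
          intro kk j hk
          have hj := j.isLt
          have hklt : (kk : ℕ) < 2 * d := by omega
          rw [hudef]
          simp only []
          rw [dif_pos hklt, show (⟨(kk : ℕ) / 2, by omega⟩ : Fin d) = j from
            Fin.ext (by show (kk : ℕ) / 2 = (j : ℕ); omega)]
        have hueval2 : ∀ kk : Fin (c + d), ¬ ((kk : ℕ) < 2 * d) → u kk = 2 := by
          intro kk hk
          rw [hudef]
          simp only []
          rw [dif_neg hk]
        have hpart1 : (Finset.univ.val.map (fun j : Fin d => u (ψ (Sum.inl (Sum.inl j)))))
            = qM.map (fun x => 4 * x - 2) := by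
          rw [Multiset.map_congr rfl (fun j _ => hueval _ j (Or.inl (hψval1 j))), ← hqmult,
            Multiset.map_map]
          rfl
        have hpart2 : (Finset.univ.val.map (fun j : Fin d => u (ψ (Sum.inl (Sum.inr j)))))
            = qM.map (fun x => 4 * x - 2) := by
          rw [Multiset.map_congr rfl (fun j _ => hueval _ j (Or.inr (hψval2 j))), ← hqmult,
            Multiset.map_map]
          rfl
        have hpart3 : (Finset.univ.val.map (fun j : Fin (c - d) => u (ψ (Sum.inr j))))
            = Multiset.replicate (c - d) 2 := by
          rw [Multiset.map_congr rfl (fun j _ => hueval2 _ (by rw [hψval3]; omega)),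
            Multiset.map_const']
          congr 1
          exact Finset.card_univ.trans (Fintype.card_fin _)
        calc Finset.univ.val.map u
            = Finset.univ.val.map (u ∘ (Equiv.ofBijective ψ hψbij)) := hcomp.symm
          _ = ((Finset.univ.val.map Sum.inl).map Sum.inl
                + (Finset.univ.val.map Sum.inr).map Sum.inl
                + Finset.univ.val.map Sum.inr).map (u ∘ ψ) := by rw [← hdecomp]; rfl
          _ = (Finset.univ.val.map (fun j : Fin d => u (ψ (Sum.inl (Sum.inl j)))))
                + (Finset.univ.val.map (fun j : Fin d => u (ψ (Sum.inl (Sum.inr j)))))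
                + (Finset.univ.val.map (fun j : Fin (c - d) => u (ψ (Sum.inr j)))) := by
              simp only [Multiset.map_add, Multiset.map_map]
              rfl
          _ = (qM.map (fun x => 4 * x - 2) + Multiset.replicate (c - d) 2)
                + qM.map (fun x => 4 * x - 2) := by
              rw [hpart1, hpart2, hpart3]
              ac_rfl
      rw [hwmult, step1.symm, step2, humult.symm]
  -- final computation
  have h2i : 2 * (i : ℕ) < c + d := by have := i.isLt; omega
  have hkeyi := congrFun hkey ⟨2 * (i : ℕ), h2i⟩
  simp only [] at hkeyi
  have hidxΛ : (⟨(((⟨2 * (i : ℕ), h2i⟩ : Fin (c + d)) : ℕ)) / 2,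
      hhalf ⟨2 * (i : ℕ), h2i⟩⟩ : Fin (c + d)) = Fin.castLE (Nat.le_add_left d c) i := by
    apply Fin.ext
    show (2 * (i : ℕ)) / 2 = (i : ℕ)
    omega
  rw [hidxΛ, dif_pos (show ((⟨2 * (i : ℕ), h2i⟩ : Fin (c + d)) : ℕ) < 2 * d from by
    show 2 * (i : ℕ) < 2 * d
    have := i.isLt
    omega)] at hkeyi
  have hidxq : (⟨(((⟨2 * (i : ℕ), h2i⟩ : Fin (c + d)) : ℕ)) / 2, by
      show (2 * (i : ℕ)) / 2 < d
      have := i.isLt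
      omega⟩ : Fin d) = i := by
    apply Fin.ext
    show (2 * (i : ℕ)) / 2 = (i : ℕ)
    omega
  rw [hidxq] at hkeyi
  -- hkeyi : Λ (castLE i) + (Λ (castLE i))⁻¹ = 4 * qv i - 2
  set k : Fin (c + d) := Fin.castLE (Nat.le_add_left d c) i with hkdef
  have hx : 0 < Λ k := hΛpos k
  have hQ : 1 ≤ qv i := hq1 i
  have hsvS : svS T k = Real.sqrt (Λ k) := rfl
  have hsvD : sv D i = Real.sqrt (qv i) := rfl
  rw [hsvD, hsvS]
  set s : ℝ := Real.sqrt (Λ k) with hsdef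
  have hspos : 0 < s := Real.sqrt_pos.mpr hx
  have hs2 : s ^ 2 = Λ k := Real.sq_sqrt hx.le
  have hsinv : (s⁻¹) ^ 2 = (Λ k)⁻¹ := by rw [inv_pow, hs2]
  have h1 : s * s⁻¹ = 1 := mul_inv_cancel₀ hspos.ne'
  have hsq : ((s + s⁻¹) / 2) ^ 2 = qv i := by
    calc ((s + s⁻¹) / 2) ^ 2 = (s ^ 2 + 2 * (s * s⁻¹) + (s⁻¹) ^ 2) / 4 := by ring
      _ = (Λ k + 2 + (Λ k)⁻¹) / 4 := by rw [hs2, hsinv, h1]; ring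
      _ = qv i := by linarith [hkeyi]
  rw [← hsq, Real.sqrt_sq (by positivity)]


end
end

section
/- Let T = [[A, B], [C, D]] ∈ U(c,d) with c ≥ d. Then |det D| = exp(N_d(T)), where N_d(T) = Σ_{i=1}^d ln((σ_i(T) + σ_i(T)^{-1})/2) and σ_i(T) are the d largest singular values of T. -/
open Matrix MeasureTheory Filter
open scoped ComplexOrder
noncomputable section

namespace Stmt6Aux
open Matrix Polynomial Finset

/-- `h(x) = (√x + (√x)⁻¹)/2`. -/
noncomputable def hfun (x : ℝ) : ℝ := (Real.sqrt x + (Real.sqrt x)⁻¹) / 2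

lemma hfun_inv (x : ℝ) : hfun x⁻¹ = hfun x := by
  unfold hfun
  rw [Real.sqrt_inv, inv_inv, add_comm]

lemma hfun_one : hfun 1 = 1 := by
  unfold hfun
  rw [Real.sqrt_one]
  norm_num

lemma hfun_pos {x : ℝ} (hx : 0 < x) : 0 < hfun x := by
  unfold hfun
  have h1 : 0 < Real.sqrt x := Real.sqrt_pos.2 hx
  positivity

lemma hfun_sq {x : ℝ} (hx : 0 < x) : 4 * hfun x ^ 2 = x + x⁻¹ + 2 := by
  unfold hfun
  have h1 : 0 < Real.sqrt x := Real.sqrt_pos.2 hx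
  have h2 : Real.sqrt x * Real.sqrt x = x := Real.mul_self_sqrt hx.le
  field_simp
  rw [Real.sq_sqrt hx.le]
  ring

lemma matrank_add_le {m n : Type*} [Fintype m] [Fintype n] (A B : Matrix m n ℂ) :
    (A + B).rank ≤ A.rank + B.rank := by
  classical
  rw [Matrix.rank, Matrix.rank, Matrix.rank, Matrix.mulVecLin_add]
  have hle : LinearMap.range (A.mulVecLin + B.mulVecLin) ≤
      LinearMap.range A.mulVecLin ⊔ LinearMap.range B.mulVecLin := by
    rintro x ⟨y, rfl⟩
    exact Submodule.mem_sup.2 ⟨A.mulVecLin y, ⟨y, rfl⟩, B.mulVecLin y, ⟨y, rfl⟩, rfl⟩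
  exact (Submodule.finrank_mono hle).trans
    (Submodule.finrank_add_le_finrank_add_finrank _ _)

lemma charpoly_conj {n : Type*} [Fintype n] [DecidableEq n]
    (W M W' : Matrix n n ℂ) (h : W * W' = 1) :
    (W * M * W').charpoly = M.charpoly := by
  have hmapone : (1 : Matrix n n ℂ).map (Polynomial.C : ℂ → ℂ[X]) = 1 :=
    Matrix.map_one _ (map_zero _) (map_one _)
  have key : charmatrix (W * M * W') =
      W.map Polynomial.C * charmatrix M * W'.map Polynomial.C := by
    rw [charmatrix, charmatrix, RingHom.mapMatrix_apply, RingHom.mapMatrix_apply,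
      Matrix.mul_sub, Matrix.sub_mul]
    congr 1
    · rw [← (Matrix.scalar_commute (X : ℂ[X]) (fun r => Commute.all _ r)
        (W.map Polynomial.C)).eq, mul_assoc,
        ← Matrix.map_mul (f := (Polynomial.C : ℂ →+* ℂ[X])), h, hmapone, mul_one]
    · rw [← Matrix.map_mul (f := (Polynomial.C : ℂ →+* ℂ[X])),
        ← Matrix.map_mul (f := (Polynomial.C : ℂ →+* ℂ[X]))]
  rw [Matrix.charpoly, Matrix.charpoly, key, Matrix.det_mul, Matrix.det_mul, mul_right_comm,
    ← Matrix.det_mul, ← Matrix.map_mul (f := (Polynomial.C : ℂ →+* ℂ[X])), h, hmapone,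
    Matrix.det_one, one_mul]

lemma charpoly_diag {n : Type*} [Fintype n] [DecidableEq n] (v : n → ℂ) :
    (Matrix.diagonal v).charpoly
      = ((Finset.univ.val.map v).map (fun a => (X : ℂ[X]) - Polynomial.C a)).prod := by
  rw [Matrix.charpoly, charmatrix, RingHom.mapMatrix_apply, Matrix.scalar_apply,
    Matrix.diagonal_map (map_zero (Polynomial.C : ℂ →+* ℂ[X])), Matrix.diagonal_sub,
    Matrix.det_diagonal, Finset.prod_eq_multiset_prod, Multiset.map_map]
  rfl

lemma conj_diag_det {n : Type*} [Fintype n] [DecidableEq n]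
    (U : Matrix n n ℂ) (hU : U * star U = 1) (v : n → ℂ) :
    (U * Matrix.diagonal v * star U).det = ∏ i, v i := by
  rw [Matrix.det_mul, Matrix.det_mul, mul_right_comm, ← Matrix.det_mul, hU, Matrix.det_one,
    one_mul, Matrix.det_diagonal]

lemma charpoly_hermitian {n : Type*} [Fintype n] [DecidableEq n]
    {H : Matrix n n ℂ} (hH : H.IsHermitian) :
    H.charpoly.roots = Finset.univ.val.map (fun i => ((hH.eigenvalues i : ℝ) : ℂ)) := by
  have hU : (hH.eigenvectorUnitary : Matrix n n ℂ) *
      star (hH.eigenvectorUnitary : Matrix n n ℂ) = 1 :=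
    (Matrix.mem_unitaryGroup_iff).mp hH.eigenvectorUnitary.2
  conv_lhs => rw [hH.spectral_theorem]
  simp only [Unitary.conjStarAlgAut_apply, Unitary.coe_star]
  rw [charpoly_conj _ _ _ hU, charpoly_diag, Polynomial.roots_multiset_prod_X_sub_C]
  exact Multiset.map_congr rfl fun x _ => rfl

lemma prod_filter_map {n : Type*} [Fintype n] (g : n → ℝ) (p : ℝ → Prop) [DecidablePred p]
    (f : ℝ → ℝ) :
    (((Finset.univ.val.map g).filter p).map f).prod
      = ∏ i ∈ Finset.univ.filter (fun i => p (g i)), f (g i) := by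
  rw [Multiset.filter_map, Multiset.map_map, Finset.prod_eq_multiset_prod, Finset.filter_val]
  rfl

end Stmt6Aux

open Stmt6Aux Polynomial in
/-- For `T = [[A,B],[C,D]] ∈ U(c,d)` with `c ≥ d`, one has `|det D| = exp(N_d(T))`. -/
theorem stmt6 (c d : ℕ) (hcd : d ≤ c) (A : Matrix (Fin c) (Fin c) ℂ)
    (B : Matrix (Fin c) (Fin d) ℂ) (C : Matrix (Fin d) (Fin c) ℂ) (D : Matrix (Fin d) (Fin d) ℂ)
    (hT : Matrix.fromBlocks A B C D ∈ pseudoU c d) :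
    ‖D.det‖ = Real.exp (NS d (Matrix.fromBlocks A B C D)) := by
  classical
  have hTm : (Matrix.fromBlocks A B C D)ᴴ * Gcd c d * Matrix.fromBlocks A B C D = Gcd c d := hT
  set T := Matrix.fromBlocks A B C D with hTdef
  -- basic algebra of G
  have hGG : Gcd c d * Gcd c d = 1 := by
    rw [Gcd, Matrix.fromBlocks_multiply]
    simp [Matrix.fromBlocks_one]
  have hGH : (Gcd c d)ᴴ = Gcd c d := by
    rw [Gcd, Matrix.fromBlocks_conjTranspose]
    simp
  have hTleft : (Gcd c d * Tᴴ * Gcd c d) * T = 1 := by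
    rw [mul_assoc, mul_assoc, ← mul_assoc Tᴴ, hTm, hGG]
  have hTright : T * (Gcd c d * Tᴴ * Gcd c d) = 1 := mul_eq_one_comm.mp hTleft
  have hTGTH : T * Gcd c d * Tᴴ = Gcd c d := by
    calc T * Gcd c d * Tᴴ = T * Gcd c d * Tᴴ * (Gcd c d * Gcd c d) := by rw [hGG, mul_one]
      _ = (T * (Gcd c d * Tᴴ * Gcd c d)) * Gcd c d := by simp only [mul_assoc]
      _ = Gcd c d := by rw [hTright, one_mul]
  -- determinants are nonzero
  have hdetG : (Gcd c d).det ≠ 0 := by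
    intro h0
    have h := congrArg Matrix.det hGG
    rw [Matrix.det_mul, h0, mul_zero, Matrix.det_one] at h
    exact zero_ne_one h
  have hdetT : T.det ≠ 0 := by
    intro h0
    have h := congrArg Matrix.det hTm
    rw [Matrix.det_mul, Matrix.det_mul, h0, mul_zero] at h
    exact hdetG h.symm
  -- block identities
  have hTm' := hTm
  rw [hTdef, Gcd, Matrix.fromBlocks_conjTranspose, Matrix.fromBlocks_multiply,
    Matrix.fromBlocks_multiply] at hTm'
  have hAA : Aᴴ * A = 1 + Cᴴ * C := by
    have h11 := congrArg Matrix.toBlocks₁₁ hTm'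
    simp only [Matrix.toBlocks_fromBlocks₁₁, Matrix.mul_one, Matrix.mul_zero, Matrix.zero_mul,
      Matrix.one_mul, add_zero, zero_add, Matrix.mul_neg, Matrix.neg_mul] at h11
    rw [← h11]
    abel
  have hTGTH' := hTGTH
  rw [hTdef, Gcd, Matrix.fromBlocks_conjTranspose, Matrix.fromBlocks_multiply,
    Matrix.fromBlocks_multiply] at hTGTH'
  have hDD : D * Dᴴ = 1 + C * Cᴴ := by
    have h22 := congrArg Matrix.toBlocks₂₂ hTGTH'
    simp only [Matrix.toBlocks_fromBlocks₂₂, Matrix.mul_one, Matrix.mul_zero, Matrix.zero_mul,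
      Matrix.one_mul, add_zero, zero_add, Matrix.mul_neg, Matrix.neg_mul] at h22
    rw [← sub_eq_add_neg] at h22
    rw [sub_eq_iff_eq_add.mp h22]
    abel
  -- |det A| = |det D|
  have habsAD : ‖A.det‖ = ‖D.det‖ := by
    have hdet1 : (Aᴴ * A).det = (D * Dᴴ).det := by
      rw [hAA, hDD, Matrix.det_one_add_mul_comm]
    rw [Matrix.det_mul, Matrix.det_mul, Matrix.det_conjTranspose, Matrix.det_conjTranspose]
      at hdet1
    have h := congrArg (‖·‖) hdet1
    simp only [Complex.star_def, norm_mul, Complex.norm_conj] at h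
    exact (mul_self_inj (norm_nonneg _) (norm_nonneg _)).mp h
  -- transfer to Fin (c+d)
  set S := T.submatrix (⇑(finSumFinEquiv (m := c) (n := d)).symm)
      (⇑(finSumFinEquiv (m := c) (n := d)).symm) with hSdef
  set hH := Matrix.isHermitian_conjTranspose_mul_self S with hHdef
  set μ := hH.eigenvalues with hμdef
  set U := (hH.eigenvectorUnitary : Matrix (Fin (c + d)) (Fin (c + d)) ℂ) with hUdef
  have hU1 : U * star U = 1 := (Matrix.mem_unitaryGroup_iff).mp hH.eigenvectorUnitary.2
  have hU2 : star U * U = 1 := (Matrix.mem_unitaryGroup_iff').mp hH.eigenvectorUnitary.2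
  have hΔ : Sᴴ * S = U * Matrix.diagonal (fun i => ((μ i : ℝ) : ℂ)) * star U :=
    hH.spectral_theorem
  have hdetS : S.det = T.det := Matrix.det_submatrix_equiv_self _ _
  -- eigenvalues are positive
  have hμ0 : ∀ i, μ i ≠ 0 := by
    have hdet : (Sᴴ * S).det = ∏ i, ((μ i : ℝ) : ℂ) := hH.det_eq_prod_eigenvalues
    rw [Matrix.det_mul, Matrix.det_conjTranspose, hdetS] at hdet
    have hne : (∏ i, ((μ i : ℝ) : ℂ)) ≠ 0 := by
      rw [← hdet]
      exact mul_ne_zero (star_ne_zero.mpr hdetT) hdetT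
    intro i hi
    apply hne
    exact Finset.prod_eq_zero (Finset.mem_univ i) (by rw [hi]; norm_num)
  have hμpos : ∀ i, 0 < μ i := fun i =>
    lt_of_le_of_ne (Matrix.eigenvalues_conjTranspose_mul_self_nonneg S i) (Ne.symm (hμ0 i))
  have hμC0 : ∀ i, ((μ i : ℝ) : ℂ) ≠ 0 := fun i => Complex.ofReal_ne_zero.mpr (hμ0 i)
  -- H⁻¹ two ways
  set G' := (Gcd c d).submatrix (⇑(finSumFinEquiv (m := c) (n := d)).symm)
      (⇑(finSumFinEquiv (m := c) (n := d)).symm) with hG'def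
  have hG'sq : G' * G' = 1 := by
    rw [hG'def, Matrix.submatrix_mul_equiv, hGG, Matrix.submatrix_one_equiv]
  have hHsub : Sᴴ * S = (Tᴴ * T).submatrix (⇑(finSumFinEquiv (m := c) (n := d)).symm)
      (⇑(finSumFinEquiv (m := c) (n := d)).symm) := by
    rw [hSdef, Matrix.conjTranspose_submatrix, Matrix.submatrix_mul_equiv]
  have hH0inv : (Gcd c d * (Tᴴ * T) * Gcd c d) * (Tᴴ * T) = 1 := by
    calc Gcd c d * (Tᴴ * T) * Gcd c d * (Tᴴ * T)
        = Gcd c d * Tᴴ * (T * Gcd c d * Tᴴ) * T := by simp only [mul_assoc]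
      _ = Gcd c d * Tᴴ * Gcd c d * T := by rw [hTGTH]
      _ = 1 := hTleft
  have hGHG : (G' * (Sᴴ * S) * G') * (Sᴴ * S) = 1 := by
    rw [hHsub, hG'def, Matrix.submatrix_mul_equiv, Matrix.submatrix_mul_equiv,
      Matrix.submatrix_mul_equiv, hH0inv, Matrix.submatrix_one_equiv]
  have hHinvG : (Sᴴ * S)⁻¹ = G' * (Sᴴ * S) * G' := Matrix.inv_eq_left_inv hGHG
  have hHinv2 : (Sᴴ * S)⁻¹ = U * Matrix.diagonal (fun i => ((μ i : ℝ) : ℂ)⁻¹) * star U := by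
    apply Matrix.inv_eq_left_inv
    rw [hΔ]
    calc U * Matrix.diagonal (fun i => ((μ i : ℝ) : ℂ)⁻¹) * star U *
          (U * Matrix.diagonal (fun i => ((μ i : ℝ) : ℂ)) * star U)
        = U * (Matrix.diagonal (fun i => ((μ i : ℝ) : ℂ)⁻¹) * ((star U * U) *
            (Matrix.diagonal (fun i => ((μ i : ℝ) : ℂ)) * star U))) := by simp only [mul_assoc]
      _ = U * (Matrix.diagonal (fun i => ((μ i : ℝ) : ℂ)⁻¹) *
            (Matrix.diagonal (fun i => ((μ i : ℝ) : ℂ)) * star U)) := by rw [hU2, one_mul]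
      _ = U * ((Matrix.diagonal (fun i => ((μ i : ℝ) : ℂ)⁻¹) *
            Matrix.diagonal (fun i => ((μ i : ℝ) : ℂ))) * star U) := by simp only [mul_assoc]
      _ = 1 := by
          rw [Matrix.diagonal_mul_diagonal]
          have h9 : (fun i => ((μ i : ℝ) : ℂ)⁻¹ * ((μ i : ℝ) : ℂ)) = fun _ => (1 : ℂ) :=
            funext fun i => inv_mul_cancel₀ (hμC0 i)
          rw [h9, Matrix.diagonal_one, one_mul, hU1]
  -- the eigenvalue multiset is inverse-closed
  have hroots2 : (Sᴴ * S).charpoly.roots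
      = Finset.univ.val.map (fun i => ((μ i : ℝ) : ℂ)) := charpoly_hermitian hH
  have hroots1 : ((Sᴴ * S)⁻¹).charpoly.roots
      = Finset.univ.val.map (fun i => ((μ i : ℝ) : ℂ)⁻¹) := by
    conv_lhs => rw [hHinv2]
    rw [charpoly_conj _ _ _ hU1, charpoly_diag, Polynomial.roots_multiset_prod_X_sub_C]
  have hcharinv : ((Sᴴ * S)⁻¹).charpoly = (Sᴴ * S).charpoly := by
    conv_lhs => rw [hHinvG]
    exact charpoly_conj _ _ _ hG'sq
  have hC : Finset.univ.val.map (fun i => ((μ i : ℝ) : ℂ)⁻¹)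
      = Finset.univ.val.map (fun i => ((μ i : ℝ) : ℂ)) := by
    rw [← hroots1, hcharinv, hroots2]
  set m := Finset.univ.val.map μ with hmdef
  have hmpos : ∀ x ∈ m, (0 : ℝ) < x := by
    intro x hx
    obtain ⟨i, _, rfl⟩ := Multiset.mem_map.mp hx
    exact hμpos i
  have hminv : m.map (·⁻¹) = m := by
    apply Multiset.map_injective Complex.ofReal_injective
    rw [hmdef, Multiset.map_map, Multiset.map_map]
    calc Finset.univ.val.map ((fun x : ℝ => ((x : ℝ) : ℂ)) ∘ ((·⁻¹) ∘ μ))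
        = Finset.univ.val.map (fun i => ((μ i : ℝ) : ℂ)⁻¹) := by
          apply Multiset.map_congr rfl
          intro i _
          simp [Function.comp, Complex.ofReal_inv]
      _ = Finset.univ.val.map (fun i => ((μ i : ℝ) : ℂ)) := hC
      _ = (Finset.univ.val.map μ).map Complex.ofReal := by rw [Multiset.map_map]; rfl
  have hfilt : m.filter (fun x => x < 1) = (m.filter (fun x => 1 < x)).map (·⁻¹) := by
    conv_lhs => rw [← hminv]
    rw [Multiset.filter_map]
    congr 1
    apply Multiset.filter_congr
    intro x hx
    exact inv_lt_one₀ (hmpos x hx)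
  -- counting
  set a := (Finset.univ.filter (fun i => 1 < μ i)).card with hadef
  set b := (Finset.univ.filter (fun i => μ i < 1)).card with hbdef
  have hcard_eq : ∀ (p : ℝ → Prop) [DecidablePred p],
      (m.filter p).card = (Finset.univ.filter (fun i => p (μ i))).card := by
    intro p _
    rw [hmdef, Multiset.filter_map, Multiset.card_map]
    rfl
  have hba : b = a := by
    have h := congrArg Multiset.card hfilt
    rw [Multiset.card_map, hcard_eq, hcard_eq] at h
    exact h
  -- rank of H - 1 equals the number of eigenvalues ≠ 1
  have hdiagsub : Sᴴ * S - 1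
      = U * Matrix.diagonal (fun i => ((μ i : ℝ) : ℂ) - 1) * star U := by
    calc Sᴴ * S - 1
        = U * Matrix.diagonal (fun i => ((μ i : ℝ) : ℂ)) * star U - U * 1 * star U := by
          rw [mul_one, hU1, ← hΔ]
      _ = U * (Matrix.diagonal (fun i => ((μ i : ℝ) : ℂ)) - 1) * star U := by
          rw [← Matrix.sub_mul, ← Matrix.mul_sub]
      _ = U * Matrix.diagonal (fun i => ((μ i : ℝ) : ℂ) - 1) * star U := by
          rw [← Matrix.diagonal_one, Matrix.diagonal_sub]
  have hUdet : IsUnit U.det := Matrix.isUnit_det_of_right_inverse hU1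
  have hUdet' : IsUnit (star U).det := Matrix.isUnit_det_of_right_inverse hU2
  have hrankdiag : (Sᴴ * S - 1).rank = (Finset.univ.filter (fun i => μ i ≠ 1)).card := by
    rw [hdiagsub, Matrix.rank_mul_eq_left_of_isUnit_det _ _ hUdet',
      Matrix.rank_mul_eq_right_of_isUnit_det _ _ hUdet, Matrix.rank_diagonal,
      Fintype.card_subtype]
    congr 1
    apply Finset.filter_congr
    intro i _
    simp [sub_ne_zero, Complex.ofReal_eq_one]
  -- H - 1 has rank at most 2d
  set P₄ := Matrix.fromBlocks (0 : Matrix (Fin c) (Fin c) ℂ) 0 0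
      ((1 : Matrix (Fin d) (Fin d) ℂ) + 1) with hP₄def
  have hGP1 : Gcd c d + P₄ = 1 := by
    rw [hP₄def, Gcd, Matrix.fromBlocks_add, add_zero, add_zero, add_zero]
    have hb2 : (-1 : Matrix (Fin d) (Fin d) ℂ) + (1 + 1) = 1 := by abel
    rw [hb2, Matrix.fromBlocks_one]
  have hd1 : Tᴴ * T - 1 = Tᴴ * P₄ * T - P₄ := by
    have h5 : Tᴴ * T = Gcd c d + Tᴴ * P₄ * T := by
      calc Tᴴ * T = Tᴴ * ((Gcd c d + P₄) * T) := by rw [hGP1, one_mul]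
        _ = Tᴴ * Gcd c d * T + Tᴴ * P₄ * T := by
            rw [add_mul, mul_add, ← mul_assoc, ← mul_assoc]
        _ = Gcd c d + Tᴴ * P₄ * T := by rw [hTm]
    rw [h5, ← hGP1]
    abel
  have hranksub : (Sᴴ * S - 1).rank ≤ d + d := by
    have heq : Sᴴ * S - 1 = (Tᴴ * T - 1).submatrix (⇑(finSumFinEquiv (m := c) (n := d)).symm)
        (⇑(finSumFinEquiv (m := c) (n := d)).symm) := by
      rw [hHsub]
      conv_lhs => rw [← Matrix.submatrix_one_equiv (finSumFinEquiv (m := c) (n := d)).symm]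
      exact (congrFun (congrFun (Matrix.submatrix_sub _ _) _) _).symm
    rw [heq, Matrix.rank_submatrix, hd1, sub_eq_add_neg]
    have hrP₄ : P₄.rank ≤ d := by
      have hfac : P₄ = (Matrix.fromRows (0 : Matrix (Fin c) (Fin d) ℂ)
          ((1 : Matrix (Fin d) (Fin d) ℂ) + 1)) *
          (Matrix.fromCols (0 : Matrix (Fin d) (Fin c) ℂ) 1) := by
        rw [Matrix.fromRows_mul_fromCols, hP₄def]
        simp
      rw [hfac]
      exact (Matrix.rank_mul_le_right _ _).trans
        ((Matrix.rank_le_card_height _).trans_eq (Fintype.card_fin d))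
    have h1 : (Tᴴ * P₄ * T).rank ≤ d :=
      ((Matrix.rank_mul_le_left _ _).trans (Matrix.rank_mul_le_right _ _)).trans hrP₄
    have h2 : (-P₄).rank ≤ d := by
      have hneg : -P₄ = ((-1 : ℂ) • 1) * P₄ := by
        rw [Matrix.smul_mul, one_mul, neg_smul, one_smul]
      rw [hneg, Matrix.rank_mul_eq_right_of_isUnit_det]
      · exact hrP₄
      · rw [Matrix.det_smul, Matrix.det_one, mul_one]
        exact isUnit_iff_ne_zero.mpr (pow_ne_zero _ (neg_ne_zero.mpr one_ne_zero))
    exact (matrank_add_le _ _).trans (add_le_add h1 h2)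
  have hab_le : a + b ≤ d + d := by
    have hsub : Finset.univ.filter (fun i => 1 < μ i) ∪
        Finset.univ.filter (fun i => μ i < 1) ⊆ Finset.univ.filter (fun i => μ i ≠ 1) := by
      intro i hi
      rcases Finset.mem_union.mp hi with h | h <;> simp only [Finset.mem_filter] at h ⊢
      · exact ⟨h.1, ne_of_gt h.2⟩
      · exact ⟨h.1, ne_of_lt h.2⟩
    have hdisj : Disjoint (Finset.univ.filter (fun i => 1 < μ i))
        (Finset.univ.filter (fun i => μ i < 1)) := by
      rw [Finset.disjoint_left]
      intro i h1 h2
      simp only [Finset.mem_filter] at h1 h2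
      exact absurd h2.2 (not_lt.mpr h1.2.le)
    calc a + b = ((Finset.univ.filter (fun i => 1 < μ i)) ∪
        (Finset.univ.filter (fun i => μ i < 1))).card :=
          (Finset.card_union_of_disjoint hdisj).symm
      _ ≤ (Finset.univ.filter (fun i => μ i ≠ 1)).card := Finset.card_le_card hsub
      _ = (Sᴴ * S - 1).rank := hrankdiag.symm
      _ ≤ d + d := hranksub
  have ha : a ≤ d := by omega
  have hb : b ≤ d := by omega
  -- sorted eigenvalues
  set ν := fun i : Fin (c + d) => μ (Tuple.sort μ i) with hνdef
  have hνmono : Monotone ν := Tuple.monotone_sort μ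
  have hνpos : ∀ i, 0 < ν i := fun i => hμpos _
  have haν : (Finset.univ.filter (fun i => 1 < ν i)).card = a := by
    rw [hadef, ← Fintype.card_subtype, ← Fintype.card_subtype]
    exact Fintype.card_congr ((Tuple.sort μ).subtypeEquiv (fun i => Iff.rfl))
  have hbν : (Finset.univ.filter (fun i => ν i < 1)).card = b := by
    rw [hbdef, ← Fintype.card_subtype, ← Fintype.card_subtype]
    exact Fintype.card_congr ((Tuple.sort μ).subtypeEquiv (fun i => Iff.rfl))
  -- exp (NS) as a product
  have hsv : ∀ i : Fin (c + d), svS T i = Real.sqrt (ν i.rev) := fun i => rfl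
  have hexp : Real.exp (NS d T)
      = ∏ i : Fin (c + d), if (i : ℕ) < d then hfun (ν i.rev) else 1 := by
    rw [NS, Real.exp_sum]
    apply Finset.prod_congr rfl
    intro i _
    by_cases hi : (i : ℕ) < d
    · rw [if_pos hi, if_pos hi, hsv i]
      exact Real.exp_log (hfun_pos (hνpos _))
    · rw [if_neg hi, if_neg hi, Real.exp_zero]
  have hexp2 : Real.exp (NS d T)
      = ∏ i ∈ Finset.univ.filter (fun i : Fin (c + d) => c ≤ (i : ℕ)), hfun (ν i) := by
    rw [hexp, Finset.prod_filter,
      ← Equiv.prod_comp Fin.revPerm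
        (fun j : Fin (c + d) => if c ≤ (j : ℕ) then hfun (ν j) else 1)]
    apply Finset.prod_congr rfl
    intro i _
    have hlt := i.isLt
    simp only [Fin.revPerm_apply]
    by_cases hi : (i : ℕ) < d
    · rw [if_pos hi, if_pos (by rw [Fin.val_rev]; omega)]
    · rw [if_neg hi, if_neg (by rw [Fin.val_rev]; omega)]
  set X := ∏ i ∈ Finset.univ.filter (fun i => 1 < ν i), hfun (ν i) with hXdef
  have hKsub : Finset.univ.filter (fun i => 1 < ν i)
      ⊆ Finset.univ.filter (fun i : Fin (c + d) => c ≤ (i : ℕ)) := by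
    intro j hj
    simp only [Finset.mem_filter] at hj ⊢
    refine ⟨Finset.mem_univ _, ?_⟩
    by_contra hlt
    push_neg at hlt
    have hsubIci : Finset.Ici j ⊆ Finset.univ.filter (fun i => 1 < ν i) := by
      intro x hx
      rw [Finset.mem_Ici] at hx
      exact Finset.mem_filter.2 ⟨Finset.mem_univ _, lt_of_lt_of_le hj.2 (hνmono hx)⟩
    have hcard := Finset.card_le_card hsubIci
    rw [Fin.card_Ici, haν] at hcard
    have hjlt := j.isLt
    omega
  have hν1 : ∀ i : Fin (c + d), c ≤ (i : ℕ) → ¬(1 < ν i) → ν i = 1 := by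
    intro i hci hni
    refine le_antisymm (not_lt.mp hni) ?_
    by_contra hlt
    push_neg at hlt
    have hsubIic : Finset.Iic i ⊆ Finset.univ.filter (fun j => ν j < 1) := by
      intro x hx
      rw [Finset.mem_Iic] at hx
      exact Finset.mem_filter.2 ⟨Finset.mem_univ _, lt_of_le_of_lt (hνmono hx) hlt⟩
    have hcard := Finset.card_le_card hsubIic
    rw [Fin.card_Iic, hbν] at hcard
    omega
  have hexpX : Real.exp (NS d T) = X := by
    rw [hexp2, hXdef]
    refine (Finset.prod_subset hKsub ?_).symm
    intro x hx hnx
    simp only [Finset.mem_filter] at hx hnx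
    have hx1 : ν x = 1 := hν1 x hx.2 (fun h => hnx ⟨Finset.mem_univ _, h⟩)
    rw [hx1, hfun_one]
  -- the product over everything is X^2
  have hνm : Finset.univ.val.map ν = m := by
    have h1 : Finset.univ.val.map ⇑(Tuple.sort μ) = Finset.univ.val := by
      have h := congrArg Finset.val (Finset.map_univ_equiv (Tuple.sort μ))
      rw [Finset.map_val] at h
      simpa using h
    rw [hmdef]
    conv_rhs => rw [← h1]
    rw [Multiset.map_map]
    rfl
  have hlow : ∏ i ∈ Finset.univ.filter (fun i => ν i < 1), hfun (ν i) = X := by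
    rw [hXdef]
    calc ∏ i ∈ Finset.univ.filter (fun i => ν i < 1), hfun (ν i)
        = (((Finset.univ.val.map ν).filter (fun x => x < 1)).map hfun).prod :=
          (prod_filter_map ν (fun x => x < 1) hfun).symm
      _ = ((m.filter (fun x => x < 1)).map hfun).prod := by rw [hνm]
      _ = (((m.filter (fun x => 1 < x)).map (·⁻¹)).map hfun).prod := by rw [hfilt]
      _ = ((m.filter (fun x => 1 < x)).map hfun).prod := by
          rw [Multiset.map_map]
          congr 1
          exact Multiset.map_congr rfl (fun x _ => hfun_inv x)
      _ = (((Finset.univ.val.map ν).filter (fun x => 1 < x)).map hfun).prod := by rw [hνm]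
      _ = ∏ i ∈ Finset.univ.filter (fun i => 1 < ν i), hfun (ν i) :=
          prod_filter_map ν (fun x => 1 < x) hfun
  have hall : ∏ i, hfun (μ i) = X * X := by
    have hperm : ∏ i, hfun (μ i) = ∏ i, hfun (ν i) :=
      (Equiv.prod_comp (Tuple.sort μ) (fun j => hfun (μ j))).symm
    rw [hperm, ← Finset.prod_filter_mul_prod_filter_not Finset.univ (fun i => 1 < ν i)
      (fun i => hfun (ν i))]
    congr 1
    rw [← Finset.prod_filter_mul_prod_filter_not (Finset.univ.filter (fun i => ¬ 1 < ν i))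
      (fun i => ν i < 1) (fun i => hfun (ν i))]
    have hf1 : (Finset.univ.filter (fun i => ¬ 1 < ν i)).filter (fun i => ν i < 1)
        = Finset.univ.filter (fun i => ν i < 1) := by
      rw [Finset.filter_filter]
      apply Finset.filter_congr
      intro i _
      constructor
      · exact fun h => h.2
      · exact fun h => ⟨not_lt.mpr h.le, h⟩
    have hf2 : ∀ i ∈ (Finset.univ.filter (fun i => ¬ 1 < ν i)).filter (fun i => ¬ ν i < 1),
        hfun (ν i) = 1 := by
      intro i hi
      simp only [Finset.mem_filter] at hi
      have h1 : ν i = 1 := le_antisymm (not_lt.mp hi.1.2) (not_lt.mp hi.2)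
      rw [h1, hfun_one]
    rw [hf1, hlow, Finset.prod_eq_one hf2, mul_one]
  -- the determinant computation
  set P₂ := T + Gcd c d * T * Gcd c d with hP₂def
  have hGTG : Gcd c d * T * Gcd c d = Matrix.fromBlocks A (-B) (-C) D := by
    rw [hTdef, Gcd, Matrix.fromBlocks_multiply, Matrix.fromBlocks_multiply]
    congr 1 <;> simp
  have hP₂blocks : P₂ = Matrix.fromBlocks (A + A) 0 0 (D + D) := by
    rw [hP₂def, hGTG, hTdef, Matrix.fromBlocks_add]
    simp only [add_neg_cancel]
  have hP₂H : P₂ᴴ = Tᴴ + Gcd c d * Tᴴ * Gcd c d := by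
    rw [hP₂def, Matrix.conjTranspose_add, Matrix.conjTranspose_mul, Matrix.conjTranspose_mul,
      hGH, ← mul_assoc]
  have e2 : Tᴴ * (Gcd c d * T * Gcd c d) = 1 := by
    rw [← mul_assoc, ← mul_assoc, hTm, hGG]
  have e4 : (Gcd c d * Tᴴ * Gcd c d) * (Gcd c d * T * Gcd c d)
      = Gcd c d * (Tᴴ * T) * Gcd c d := by
    simp only [mul_assoc]
    rw [← mul_assoc (Gcd c d) (Gcd c d) (T * Gcd c d), hGG, one_mul]
  have hPP : P₂ᴴ * P₂ = Tᴴ * T + Gcd c d * (Tᴴ * T) * Gcd c d + 1 + 1 := by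
    rw [hP₂H, hP₂def, add_mul, mul_add, mul_add, e2, e4, hTleft]
    abel
  set Q := P₂.submatrix (⇑(finSumFinEquiv (m := c) (n := d)).symm)
      (⇑(finSumFinEquiv (m := c) (n := d)).symm) with hQdef
  have htrans : (Gcd c d * (Tᴴ * T) * Gcd c d).submatrix
      (⇑(finSumFinEquiv (m := c) (n := d)).symm) (⇑(finSumFinEquiv (m := c) (n := d)).symm)
      = G' * (Sᴴ * S) * G' := by
    rw [hHsub, hG'def, Matrix.submatrix_mul_equiv, Matrix.submatrix_mul_equiv]
  have hQQ' : Qᴴ * Q = Sᴴ * S + G' * (Sᴴ * S) * G' + 1 + 1 := by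
    rw [hQdef, Matrix.conjTranspose_submatrix, Matrix.submatrix_mul_equiv, hPP]
    rw [Matrix.submatrix_add, Matrix.submatrix_add, Matrix.submatrix_add]
    rw [Pi.add_apply, Pi.add_apply, Pi.add_apply, Pi.add_apply, Pi.add_apply, Pi.add_apply]
    rw [Matrix.submatrix_one_equiv, htrans, hHsub]
  have hQdiag : Qᴴ * Q = U * Matrix.diagonal
      (fun i => ((μ i : ℝ) : ℂ) + ((μ i : ℝ) : ℂ)⁻¹ + 1 + 1) * star U := by
    rw [hQQ', ← hHinvG, hHinv2, hΔ]
    have hsplit : Matrix.diagonal (fun i => ((μ i : ℝ) : ℂ) + ((μ i : ℝ) : ℂ)⁻¹ + 1 + 1)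
        = Matrix.diagonal (fun i => ((μ i : ℝ) : ℂ))
          + Matrix.diagonal (fun i => ((μ i : ℝ) : ℂ)⁻¹) + 1 + 1 := by
      simp only [← Matrix.diagonal_one, Matrix.diagonal_add]
    rw [hsplit]
    simp only [Matrix.mul_add, Matrix.add_mul, Matrix.mul_one, hU1]
  have hdetQQ : (Qᴴ * Q).det
      = ∏ i, (((μ i : ℝ) : ℂ) + ((μ i : ℝ) : ℂ)⁻¹ + 1 + 1) := by
    rw [hQdiag]
    exact conj_diag_det U hU1 _
  have haQ : ‖Q.det‖ * ‖Q.det‖ = ∏ i, (μ i + (μ i)⁻¹ + 2) := by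
    have h := hdetQQ
    rw [Matrix.det_mul, Matrix.det_conjTranspose] at h
    have hco : (∏ i, (((μ i : ℝ) : ℂ) + ((μ i : ℝ) : ℂ)⁻¹ + 1 + 1))
        = ((∏ i, (μ i + (μ i)⁻¹ + 2) : ℝ) : ℂ) := by
      rw [Complex.ofReal_prod]
      exact Finset.prod_congr rfl fun i _ => by push_cast; ring
    rw [hco] at h
    have h2 := congrArg (‖·‖) h
    rw [norm_mul, Complex.star_def, Complex.norm_conj, Complex.norm_real, Real.norm_eq_abs] at h2
    have hnn : 0 ≤ ∏ i, (μ i + (μ i)⁻¹ + 2) :=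
      Finset.prod_nonneg fun i _ => by have := hμpos i; positivity
    rw [abs_of_nonneg hnn] at h2
    exact h2
  have haQ2 : ‖Q.det‖ = 2 ^ (c + d) * ‖D.det‖ ^ 2 := by
    have hdq : Q.det = (A + A).det * (D + D).det := by
      rw [hQdef, Matrix.det_submatrix_equiv_self, hP₂blocks, Matrix.det_fromBlocks_zero₂₁]
    have hAA2 : (A + A).det = (2 : ℂ) ^ c * A.det := by
      rw [← two_smul ℂ A, Matrix.det_smul, Fintype.card_fin]
    have hDD2 : (D + D).det = (2 : ℂ) ^ d * D.det := by
      rw [← two_smul ℂ D, Matrix.det_smul, Fintype.card_fin]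
    rw [hdq, hAA2, hDD2, norm_mul, norm_mul, norm_mul, norm_pow,
      norm_pow, Complex.norm_two, habsAD]
    ring
  -- final numeric assembly
  have hfinal : ‖D.det‖ ^ 4 = X ^ 4 := by
    have h1 : (2 ^ (c + d) * ‖D.det‖ ^ 2) ^ 2 = ∏ i, (μ i + (μ i)⁻¹ + 2) := by
      rw [← haQ2, sq]
      exact haQ
    have h2 : ∏ i, (μ i + (μ i)⁻¹ + 2) = 4 ^ (c + d) * ∏ i, hfun (μ i) ^ 2 := by
      calc ∏ i, (μ i + (μ i)⁻¹ + 2) = ∏ i : Fin (c + d), (4 * hfun (μ i) ^ 2) :=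
            Finset.prod_congr rfl fun i _ => (hfun_sq (hμpos i)).symm
        _ = 4 ^ (c + d) * ∏ i, hfun (μ i) ^ 2 := by
            rw [Finset.prod_mul_distrib, Finset.prod_const, Finset.card_univ, Fintype.card_fin]
    have h3 : ∏ i, hfun (μ i) ^ 2 = (X * X) ^ 2 := by
      rw [Finset.prod_pow, hall]
    have h4 : (4 : ℝ) ^ (c + d) = (2 ^ (c + d)) ^ 2 := by
      rw [show (4 : ℝ) = 2 ^ 2 by norm_num, ← pow_mul, ← pow_mul, mul_comm]
    have key : (4 : ℝ) ^ (c + d) * ‖D.det‖ ^ 4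
        = (4 : ℝ) ^ (c + d) * X ^ 4 := by
      calc (4 : ℝ) ^ (c + d) * ‖D.det‖ ^ 4
          = (2 ^ (c + d) * ‖D.det‖ ^ 2) ^ 2 := by rw [h4]; ring
        _ = ∏ i, (μ i + (μ i)⁻¹ + 2) := h1
        _ = 4 ^ (c + d) * (X * X) ^ 2 := by rw [h2, h3]
        _ = (4 : ℝ) ^ (c + d) * X ^ 4 := by ring
    exact mul_left_cancel₀ (by positivity) key
  have hXpos : 0 < X := by
    rw [← hexpX]
    exact Real.exp_pos _
  have habsD : ‖D.det‖ = X :=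
    (pow_left_strictMonoOn₀ (by norm_num : (4 : ℕ) ≠ 0)).injOn
      (Set.mem_setOf.2 (norm_nonneg _)) (Set.mem_setOf.2 hXpos.le) hfinal
  rw [habsD, hexpX]


end
end

section
/- The group HSp(2) of 2×2 complex matrices T with T* J T = J (J = [[0,1],[-1,0]]) equals the set {e^{iφ} A : φ ∈ ℝ, A ∈ SL(2,ℝ)}, i.e. HSp(2) = S^1 · SL(2,ℝ). -/
open Matrix MeasureTheory Filter
open scoped ComplexOrder
noncomputable section

lemma phase_aux (z : ℂ) : z * Complex.exp (-(z.arg : ℂ) * Complex.I) = (‖z‖ : ℂ) := by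
  have h := Complex.norm_mul_exp_arg_mul_I z
  set t := z.arg with ht
  rw [← h, mul_assoc, ← Complex.exp_add]
  have h2 : (t : ℂ) * Complex.I + -(t : ℂ) * Complex.I = 0 := by ring
  rw [h2, Complex.exp_zero, mul_one, h]

lemma aux1 (A C : ℂ) (hA : A.im = 0) (hA0 : A.re ≠ 0)
    (E0 : (starRingEnd ℂ) A * C = (starRingEnd ℂ) C * A) : C.im = 0 := by
  have h := congrArg Complex.im E0
  simp [Complex.mul_im, hA] at h
  have h2 : A.re * C.im = 0 := by linarith
  rcases mul_eq_zero.1 h2 with h3 | h3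
  · exact absurd h3 hA0
  · exact h3

lemma aux2 (A B C D : ℂ) (hA : A.im = 0) (hC : C.im = 0)
    (E1 : (starRingEnd ℂ) A * D - (starRingEnd ℂ) C * B = 1)
    (E3 : (starRingEnd ℂ) B * D = (starRingEnd ℂ) D * B) :
    B.im = 0 ∧ D.im = 0 ∧ A.re * D.re - C.re * B.re = 1 := by
  rw [Complex.ext_iff] at E1 E3
  obtain ⟨hR, hI⟩ := E1
  obtain ⟨_, hP⟩ := E3
  simp [Complex.mul_re, Complex.mul_im, hA, hC] at hR hI hP
  have hq : B.im = 0 := by linear_combination (-(A.re) / 2) * hP + (-B.im) * hR + B.re * hI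
  have hv : D.im = 0 := by linear_combination (-(C.re) / 2) * hP + (-D.im) * hR + D.re * hI
  exact ⟨hq, hv, by linarith⟩

/-- `HSp(2) = S¹ · SL(2,ℝ)`: the set of `T` with `Tᴴ J T = J` equals the set of matrices
`e^{iφ} A` with `φ ∈ ℝ` and `A ∈ SL(2,ℝ)`. -/
theorem stmt10 :
    { T : Matrix (Fin 2) (Fin 2) ℂ |
        Tᴴ * (!![0, 1; -1, 0] : Matrix (Fin 2) (Fin 2) ℂ) * T = !![0, 1; -1, 0] } =
      { T : Matrix (Fin 2) (Fin 2) ℂ |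
        ∃ (φ : ℝ) (A : Matrix (Fin 2) (Fin 2) ℝ),
          A.det = 1 ∧ T = Complex.exp ((φ : ℂ) * Complex.I) • A.map Complex.ofReal } := by
  ext T
  simp only [Set.mem_setOf_eq]
  constructor
  · intro h
    have e00 := congrFun (congrFun h 0) 0
    have e01 := congrFun (congrFun h 0) 1
    have e11 := congrFun (congrFun h 1) 1
    simp [Matrix.mul_apply, Fin.sum_univ_two, Matrix.conjTranspose_apply] at e00 e01 e11
    obtain ⟨φ, s, hss, hconjs, haim, hcim⟩ :
        ∃ (φ : ℝ) (s : ℂ), Complex.exp ((φ : ℂ) * Complex.I) * s = 1 ∧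
          (starRingEnd ℂ) s * s = 1 ∧ (T 0 0 * s).im = 0 ∧ (T 1 0 * s).im = 0 := by
      by_cases ha : T 0 0 = 0
      · refine ⟨(T 1 0).arg, Complex.exp (-((T 1 0).arg : ℂ) * Complex.I), ?_, ?_, ?_, ?_⟩
        · rw [← Complex.exp_add]; ring_nf; exact Complex.exp_zero
        · rw [← Complex.exp_conj, ← Complex.exp_add]
          have : (starRingEnd ℂ) (-((T 1 0).arg : ℂ) * Complex.I) = ((T 1 0).arg : ℂ) * Complex.I := by
            rw [_root_.map_mul, map_neg, Complex.conj_ofReal, Complex.conj_I]; ring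
          rw [this]; ring_nf; exact Complex.exp_zero
        · simp [ha]
        · rw [phase_aux]; simp
      · refine ⟨(T 0 0).arg, Complex.exp (-((T 0 0).arg : ℂ) * Complex.I), ?_, ?_, ?_, ?_⟩
        · rw [← Complex.exp_add]; ring_nf; exact Complex.exp_zero
        · rw [← Complex.exp_conj, ← Complex.exp_add]
          have : (starRingEnd ℂ) (-((T 0 0).arg : ℂ) * Complex.I) = ((T 0 0).arg : ℂ) * Complex.I := by
            rw [_root_.map_mul, map_neg, Complex.conj_ofReal, Complex.conj_I]; ring
          rw [this]; ring_nf; exact Complex.exp_zero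
        · rw [phase_aux]; simp
        · refine aux1 (T 0 0 * Complex.exp (-((T 0 0).arg : ℂ) * Complex.I)) _ ?_ ?_ ?_
          · rw [phase_aux]; simp
          · rw [phase_aux]; simpa using ha
          · simp only [_root_.map_mul]
            have hcs : (starRingEnd ℂ) (Complex.exp (-((T 0 0).arg : ℂ) * Complex.I)) *
                Complex.exp (-((T 0 0).arg : ℂ) * Complex.I) = 1 := by
              rw [← Complex.exp_conj, ← Complex.exp_add]
              have : (starRingEnd ℂ) (-((T 0 0).arg : ℂ) * Complex.I) = ((T 0 0).arg : ℂ) * Complex.I := by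
                rw [_root_.map_mul, map_neg, Complex.conj_ofReal, Complex.conj_I]; ring
              rw [this]; ring_nf; exact Complex.exp_zero
            linear_combination ((starRingEnd ℂ) (T 0 0) * T 1 0) * hcs
              - ((starRingEnd ℂ) (T 1 0) * T 0 0) * hcs + e00
    have E1 : (starRingEnd ℂ) (T 0 0 * s) * (T 1 1 * s)
        - (starRingEnd ℂ) (T 1 0 * s) * (T 0 1 * s) = 1 := by
      simp only [_root_.map_mul]
      linear_combination ((starRingEnd ℂ) (T 0 0) * T 1 1) * hconjs
        - ((starRingEnd ℂ) (T 1 0) * T 0 1) * hconjs + e01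
    have E3 : (starRingEnd ℂ) (T 0 1 * s) * (T 1 1 * s)
        = (starRingEnd ℂ) (T 1 1 * s) * (T 0 1 * s) := by
      simp only [_root_.map_mul]
      linear_combination ((starRingEnd ℂ) (T 0 1) * T 1 1) * hconjs
        - ((starRingEnd ℂ) (T 1 1) * T 0 1) * hconjs + e11
    obtain ⟨hbim, hdim, hdet⟩ := aux2 _ _ _ _ haim hcim E1 E3
    refine ⟨φ, !![(T 0 0 * s).re, (T 0 1 * s).re; (T 1 0 * s).re, (T 1 1 * s).re], ?_, ?_⟩
    · rw [Matrix.det_fin_two_of]; linarith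
    · have key : ∀ (x : ℂ), (x * s).im = 0 →
          x = Complex.exp ((φ : ℂ) * Complex.I) * ((x * s).re : ℂ) := by
        intro x hx
        have hxs : ((x * s).re : ℂ) = x * s := by
          apply Complex.ext <;> simp [hx]
        rw [hxs, ← mul_assoc, mul_comm (Complex.exp _) x, mul_assoc, hss, mul_one]
      funext i j
      fin_cases i <;> fin_cases j <;>
        simp only [Matrix.smul_apply, Matrix.map_apply, Matrix.cons_val', Matrix.cons_val_zero,
          Matrix.cons_val_one, Matrix.head_cons, Matrix.head_fin_const, Matrix.empty_val',
          smul_eq_mul]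
      · exact key _ haim
      · exact key _ hbim
      · exact key _ hcim
      · exact key _ hdim
  · rintro ⟨φ, A, hA, hT⟩
    have hE : (starRingEnd ℂ) (Complex.exp ((φ : ℂ) * Complex.I))
        * Complex.exp ((φ : ℂ) * Complex.I) = 1 := by
      rw [← Complex.exp_conj, ← Complex.exp_add]
      have : (starRingEnd ℂ) ((φ : ℂ) * Complex.I) = -(φ : ℂ) * Complex.I := by
        rw [_root_.map_mul, Complex.conj_ofReal, Complex.conj_I]; ring
      rw [this]; ring_nf; exact Complex.exp_zero
    have hdC : (A 0 0 : ℂ) * (A 1 1 : ℂ) - (A 0 1 : ℂ) * (A 1 0 : ℂ) = 1 := by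
      rw [Matrix.det_fin_two] at hA
      exact_mod_cast congrArg (Complex.ofReal) hA
    subst hT
    funext i j
    fin_cases i <;> fin_cases j <;>
      simp [Matrix.mul_apply, Fin.sum_univ_two, Matrix.conjTranspose_apply, star_mul',
        Complex.star_def, Complex.conj_ofReal]
    · ring
    · linear_combination ((A 0 0 : ℂ) * (A 1 1 : ℂ) - (A 1 0 : ℂ) * (A 0 1 : ℂ)) * hE + hdC
    · linear_combination (-(A 0 0 : ℂ) * (A 1 1 : ℂ) + (A 1 0 : ℂ) * (A 0 1 : ℂ)) * hE - hdC
    · ring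


end
end

section
/- Let M ∈ Mat(c×d, ℂ) with M* M < 1_d (strict matrix inequality, i.e. 1_d - M* M positive definite) and let T = [[A,B],[C,D]] ∈ U(c,d). Then the matrix C M + D is invertible, and the Möbius image T·M := (A M + B)(C M + D)^{-1} again satisfies (T·M)*(T·M) < 1_d. -/
open Matrix MeasureTheory Filter
open scoped ComplexOrder
noncomputable section

lemma posDef_conj_aux {n : Type*} [Fintype n] [DecidableEq n] {P : Matrix n n ℂ}
    (hP : P.PosDef) (N : Matrix n n ℂ) (hN : IsUnit N) : (Nᴴ * P * N).PosDef := by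
  refine Matrix.PosDef.of_dotProduct_mulVec_pos (Matrix.isHermitian_conjTranspose_mul_mul N hP.1) fun x hx => ?_
  have hinj := Matrix.mulVec_injective_iff_isUnit.mpr hN
  have hx' : N *ᵥ x ≠ 0 := fun h => hx (hinj (by simpa using h))
  simpa only [star_mulVec, dotProduct_mulVec, vecMul_vecMul] using hP.dotProduct_mulVec_pos hx'

/-- `U(c,d)` acts on the Cartan domain `R_I(c,d) = {M : Mᴴ M < 1}` by Möbius
transformations: `CM + D` is invertible and `(T·M)ᴴ (T·M) < 1`. -/
theorem stmt12 (c d : ℕ) (A : Matrix (Fin c) (Fin c) ℂ) (B : Matrix (Fin c) (Fin d) ℂ)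
    (C : Matrix (Fin d) (Fin c) ℂ) (D : Matrix (Fin d) (Fin d) ℂ)
    (hT : Matrix.fromBlocks A B C D ∈ pseudoU c d)
    (M : Matrix (Fin c) (Fin d) ℂ) (hM : (1 - Mᴴ * M).PosDef) :
    IsUnit (C * M + D) ∧
    (1 - ((A * M + B) * (C * M + D)⁻¹)ᴴ * ((A * M + B) * (C * M + D)⁻¹)).PosDef := by
  set X := A * M + B with hX
  set Y := C * M + D with hY
  set T := Matrix.fromBlocks A B C D with hTdef
  set N : Matrix (Fin c ⊕ Fin d) (Fin d) ℂ := Matrix.fromRows M 1 with hN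
  have hTN : T * N = Matrix.fromRows X Y := by
    rw [hTdef, hN, Matrix.fromBlocks_mul_fromRows]
    simp [hX, hY]
  have hGN : Gcd c d * N = Matrix.fromRows M (-1) := by
    rw [Gcd, hN, Matrix.fromBlocks_mul_fromRows]
    simp
  have hGTN : Gcd c d * (T * N) = Matrix.fromRows X (-Y) := by
    rw [hTN, Gcd, Matrix.fromBlocks_mul_fromRows]
    simp
  have key : Xᴴ * X - Yᴴ * Y = Mᴴ * M - 1 := by
    calc Xᴴ * X - Yᴴ * Y = (T * N)ᴴ * (Gcd c d * (T * N)) := by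
          rw [hGTN, hTN, Matrix.conjTranspose_fromRows_eq_fromCols_conjTranspose,
            Matrix.fromCols_mul_fromRows]
          simp [Matrix.mul_neg, sub_eq_add_neg]
      _ = Nᴴ * (Tᴴ * Gcd c d * T) * N := by
          simp only [Matrix.conjTranspose_mul, Matrix.mul_assoc]
      _ = Nᴴ * (Gcd c d * N) := by rw [hT, Matrix.mul_assoc]
      _ = Mᴴ * M - 1 := by
          rw [hGN, Matrix.conjTranspose_fromRows_eq_fromCols_conjTranspose,
            Matrix.fromCols_mul_fromRows]
          simp [Matrix.mul_neg, sub_eq_add_neg]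
  have h2 : Yᴴ * Y = Xᴴ * X + (1 - Mᴴ * M) := by
    rw [sub_eq_iff_eq_add'] at key
    rw [key]; abel
  have h3 : (Yᴴ * Y).PosDef := by
    rw [h2]
    exact Matrix.PosDef.posSemidef_add (Matrix.posSemidef_conjTranspose_mul_self X) hM
  have hYunit : IsUnit Y := by
    have hu := h3.isUnit
    rw [Matrix.isUnit_iff_isUnit_det, Matrix.det_mul] at hu
    exact (Matrix.isUnit_iff_isUnit_det _).mpr (isUnit_of_mul_isUnit_right hu)
  refine ⟨hYunit, ?_⟩
  set Q := Y⁻¹ with hQ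
  have hYQ : Y * Q = 1 := Matrix.mul_nonsing_inv _ ((Matrix.isUnit_iff_isUnit_det _).mp hYunit)
  have hQY : Q * Y = 1 := Matrix.nonsing_inv_mul _ ((Matrix.isUnit_iff_isUnit_det _).mp hYunit)
  have hQunit : IsUnit Q := ⟨⟨Q, Y, hQY, hYQ⟩, rfl⟩
  have h4 : Yᴴ * Y - Xᴴ * X = 1 - Mᴴ * M := by rw [← neg_sub, key, neg_sub]
  have heq : 1 - (X * Q)ᴴ * (X * Q) = Qᴴ * (1 - Mᴴ * M) * Q := by
    calc 1 - (X * Q)ᴴ * (X * Q) = (Y * Q)ᴴ * (Y * Q) - (X * Q)ᴴ * (X * Q) := by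
          rw [hYQ]; simp
      _ = Qᴴ * (Yᴴ * Y - Xᴴ * X) * Q := by
          simp only [Matrix.conjTranspose_mul, Matrix.mul_sub, Matrix.sub_mul, Matrix.mul_assoc]
      _ = Qᴴ * (1 - Mᴴ * M) * Q := by rw [h4]
  rw [heq]
  exact posDef_conj_aux hM Q hQunit


end
end

section
/- Let T_1,...,T_n ∈ U(c,d) with lower-right d×d blocks D_1,...,D_n, and let B(0) = diag(0_c, 1_d). Then the product D := B(0) T_1 B(0) T_2 ⋯ B(0) T_n is conjugate (via Q = [[1_c, 0],[D_n^{-1} C_n, 1_d]]) to the block matrix [[0, 0],[0, D_1 D_2 ⋯ D_n]]; in particular the spectral radius of Λ^d D equals |det(D_1 ⋯ D_n)| = Π_{j=1}^n |det D_j|. -/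
open Matrix MeasureTheory Filter
open scoped ComplexOrder
noncomputable section

open Polynomial in
lemma charpoly_conj' {m : Type*} [Fintype m] [DecidableEq m]
    (M Q Qi : Matrix m m ℂ) (h : Qi * Q = 1) :
    (Qi * M * Q).charpoly = M.charpoly := by
  have hscalar : Matrix.scalar m (X : ℂ[X]) = (X : ℂ[X]) • (1 : Matrix m m ℂ[X]) := by
    ext i j
    by_cases hij : i = j <;>
      simp [Matrix.scalar_apply, Matrix.one_apply, Matrix.diagonal_apply, hij]
  have hmap : (Qi.map (C : ℂ →+* ℂ[X])) * (Q.map (C : ℂ →+* ℂ[X])) = 1 := by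
    rw [← Matrix.map_mul, h, Matrix.map_one _ (map_zero _) (map_one _)]
  have hchar : charmatrix (Qi * M * Q) =
      (Qi.map (C : ℂ →+* ℂ[X])) * charmatrix M * (Q.map (C : ℂ →+* ℂ[X])) := by
    rw [charmatrix, charmatrix, mul_sub, sub_mul]
    congr 1
    · rw [hscalar, mul_smul_comm, smul_mul_assoc, mul_one, hmap]
    · simp only [RingHom.mapMatrix_apply, ← Matrix.map_mul]
  have hdet : (Qi.map (C : ℂ →+* ℂ[X])).det * (Q.map (C : ℂ →+* ℂ[X])).det = 1 := by
    rw [← Matrix.det_mul, hmap, Matrix.det_one]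
  rw [Matrix.charpoly, Matrix.charpoly, hchar, Matrix.det_mul, Matrix.det_mul,
    mul_right_comm, hdet, one_mul]

open Polynomial in
lemma charpoly_zero' (c : ℕ) : (0 : Matrix (Fin c) (Fin c) ℂ).charpoly = X ^ c := by
  have h : charmatrix (0 : Matrix (Fin c) (Fin c) ℂ) = Matrix.diagonal fun _ => (X : ℂ[X]) := by
    ext i j
    by_cases hij : i = j <;> simp [charmatrix_apply, Matrix.diagonal_apply, hij]
  rw [Matrix.charpoly, h, Matrix.det_diagonal]
  simp

lemma take_sort_prod' (m : Multiset ℝ) (c : ℕ) (hm : ∀ x ∈ m, 0 ≤ x) :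
    (((Multiset.replicate c 0 + m).sort (· ≥ ·)).take (Multiset.card m)).prod = m.prod := by
  have hperm : (Multiset.replicate c 0 + m).sort (· ≥ ·)
      = m.sort (· ≥ ·) ++ List.replicate c 0 := by
    refine (fun hp hs => List.Perm.eq_of_pairwise' (Multiset.pairwise_sort _ _) hs hp) ?_ ?_
    · rw [← Multiset.coe_eq_coe, Multiset.sort_eq]
      simp only [← Multiset.coe_add]
      rw [Multiset.sort_eq]
      simp [add_comm, ← Multiset.coe_replicate]
    · rw [List.pairwise_append]
      refine ⟨Multiset.pairwise_sort _ _, List.pairwise_replicate.mpr (Or.inr le_rfl), ?_⟩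
      intro a ha b hb
      have ha' : a ∈ m := by rwa [← Multiset.mem_coe, Multiset.sort_eq] at ha
      have hb' : b = 0 := List.eq_of_mem_replicate hb
      rw [hb']
      exact hm a ha'
  have hlen : (Multiset.sort m (· ≥ ·)).length = Multiset.card m := Multiset.length_sort _
  rw [hperm, ← hlen, List.take_left, ← Multiset.prod_coe, Multiset.sort_eq]

lemma prod_lower' {c d : ℕ} : ∀ (n : ℕ) (C : Fin (n+1) → Matrix (Fin d) (Fin c) ℂ)
    (D : Fin (n+1) → Matrix (Fin d) (Fin d) ℂ),
    (List.ofFn fun j => (Matrix.fromBlocks 0 0 (C j) (D j) :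
        Matrix (Fin c ⊕ Fin d) (Fin c ⊕ Fin d) ℂ)).prod
      = Matrix.fromBlocks 0 0 ((List.ofFn fun j : Fin n => D j.castSucc).prod * C (Fin.last n))
          (List.ofFn fun j => D j).prod := by
  intro n
  induction n with
  | zero =>
    intro C D
    simp [List.ofFn_succ]
  | succ n ih =>
    intro C D
    rw [List.ofFn_succ, List.prod_cons, ih (fun j => C j.succ) (fun j => D j.succ)]
    have h1 : (List.ofFn fun j : Fin (n+1+1) => D j)
        = D 0 :: List.ofFn (fun j : Fin (n+1) => D j.succ) := List.ofFn_succ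
    have h2 : (List.ofFn fun j : Fin (n+1) => D j.castSucc)
        = D 0 :: List.ofFn (fun j : Fin n => D j.castSucc.succ) := by
      rw [List.ofFn_succ]
      simp [-Fin.castSucc_succ, Fin.succ_castSucc]
    rw [h1, h2, List.prod_cons, List.prod_cons]
    simp only [Matrix.fromBlocks_multiply, Fin.succ_castSucc, Fin.succ_last, Matrix.zero_mul,
      Matrix.mul_zero, add_zero, zero_add, Matrix.mul_one, Matrix.one_mul, mul_assoc]
    rw [Matrix.mul_assoc]

/-- For `T₁, …, T_n ∈ U(c,d)` with lower-right blocks `D_j` and `B(0) = diag(0_c, 1_d)`,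
the product `D = B(0)T₁ ⋯ B(0)T_n` is conjugate via `Q = [[1_c, 0],[D_n⁻¹ C_n, 1_d]]`
to `[[0,0],[0, D₁⋯D_n]]`; in particular
`ρ(Λ^d D) = |det(D₁⋯D_n)| = Π_j |det D_j|`. -/

theorem stmt14 (c d n : ℕ)
    (T : Fin (n + 1) → Matrix (Fin c ⊕ Fin d) (Fin c ⊕ Fin d) ℂ)
    (A : Fin (n + 1) → Matrix (Fin c) (Fin c) ℂ) (B : Fin (n + 1) → Matrix (Fin c) (Fin d) ℂ)
    (C : Fin (n + 1) → Matrix (Fin d) (Fin c) ℂ) (D : Fin (n + 1) → Matrix (Fin d) (Fin d) ℂ)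
    (hT : ∀ j, T j ∈ pseudoU c d)
    (hblk : ∀ j, T j = Matrix.fromBlocks (A j) (B j) (C j) (D j)) :
    (List.ofFn fun j => (Matrix.fromBlocks 0 0 0 1 : Matrix (Fin c ⊕ Fin d) (Fin c ⊕ Fin d) ℂ) * T j).prod =
        (Matrix.fromBlocks 1 0 ((D (Fin.last n))⁻¹ * C (Fin.last n)) 1)⁻¹ *
          Matrix.fromBlocks 0 0 0 (List.ofFn fun j => D j).prod *
          Matrix.fromBlocks 1 0 ((D (Fin.last n))⁻¹ * C (Fin.last n)) 1 ∧
    rhoLam d (List.ofFn fun j => (Matrix.fromBlocks 0 0 0 1 : Matrix (Fin c ⊕ Fin d) (Fin c ⊕ Fin d) ℂ) * T j).prod =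
        ‖(List.ofFn fun j => D j).prod.det‖ ∧
    ‖(List.ofFn fun j => D j).prod.det‖ = ∏ j, ‖(D j).det‖ := by
  classical
  have hE : ∀ j, (Matrix.fromBlocks 0 0 0 1 : Matrix (Fin c ⊕ Fin d) (Fin c ⊕ Fin d) ℂ) * T j
      = Matrix.fromBlocks 0 0 (C j) (D j) := by
    intro j
    rw [hblk j, Matrix.fromBlocks_multiply]
    simp
  have hlist : (List.ofFn fun j =>
        (Matrix.fromBlocks 0 0 0 1 : Matrix (Fin c ⊕ Fin d) (Fin c ⊕ Fin d) ℂ) * T j)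
      = List.ofFn fun j => Matrix.fromBlocks 0 0 (C j) (D j) := by
    simp only [hE]
  -- D j is invertible
  have hDunit : ∀ j, IsUnit (D j).det := by
    intro j
    have h := hT j
    rw [pseudoU, Set.mem_setOf_eq, hblk j, Gcd, Matrix.fromBlocks_conjTranspose,
      Matrix.fromBlocks_multiply, Matrix.fromBlocks_multiply] at h
    have h22 := congrArg Matrix.toBlocks₂₂ h
    simp only [Matrix.toBlocks_fromBlocks₂₂] at h22
    have key : (D j)ᴴ * D j = 1 + (B j)ᴴ * B j := by
      have h' : (B j)ᴴ * B j - (D j)ᴴ * D j = -1 := by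
        simpa [Matrix.mul_neg, sub_eq_add_neg] using h22
      have h'' := eq_add_of_sub_eq h'
      rw [h'']
      abel
    have hpd : ((D j)ᴴ * D j).PosDef := by
      rw [key]
      exact Matrix.PosDef.one.add_posSemidef (Matrix.posSemidef_conjTranspose_mul_self (B j))
    have hu : IsUnit ((D j)ᴴ * D j).det := (Matrix.isUnit_iff_isUnit_det _).mp hpd.isUnit
    rw [Matrix.det_mul] at hu
    exact isUnit_of_mul_isUnit_right hu
  set PD := (List.ofFn fun j => D j).prod with hPDdef
  set Pp := (List.ofFn fun j : Fin n => D j.castSucc).prod with hPpdef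
  have hsplit : PD = Pp * D (Fin.last n) := by
    rw [hPDdef, List.ofFn_succ' (f := fun j => D j), List.concat_eq_append, List.prod_append]
    simp [hPpdef]
  have hDD : D (Fin.last n) * (D (Fin.last n))⁻¹ = 1 :=
    Matrix.mul_nonsing_inv _ (hDunit _)
  have hPDK : PD * ((D (Fin.last n))⁻¹ * C (Fin.last n)) = Pp * C (Fin.last n) := by
    rw [hsplit, Matrix.mul_assoc, ← Matrix.mul_assoc (D (Fin.last n)), hDD, Matrix.one_mul]
  set K := (D (Fin.last n))⁻¹ * C (Fin.last n) with hK
  have hQiQ : (Matrix.fromBlocks 1 0 (-K) 1 : Matrix (Fin c ⊕ Fin d) (Fin c ⊕ Fin d) ℂ) *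
      Matrix.fromBlocks 1 0 K 1 = 1 := by
    rw [Matrix.fromBlocks_multiply]
    simpa using Matrix.fromBlocks_one
  have hQinv : (Matrix.fromBlocks 1 0 K 1 : Matrix (Fin c ⊕ Fin d) (Fin c ⊕ Fin d) ℂ)⁻¹
      = Matrix.fromBlocks 1 0 (-K) 1 := Matrix.inv_eq_left_inv hQiQ
  have hLHS : (List.ofFn fun j =>
        (Matrix.fromBlocks 0 0 0 1 : Matrix (Fin c ⊕ Fin d) (Fin c ⊕ Fin d) ℂ) * T j).prod
      = Matrix.fromBlocks 0 0 (Pp * C (Fin.last n)) PD := by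
    rw [hlist, prod_lower']
  have hconj : (Matrix.fromBlocks 1 0 (-K) 1 : Matrix (Fin c ⊕ Fin d) (Fin c ⊕ Fin d) ℂ) *
      Matrix.fromBlocks 0 0 0 PD * Matrix.fromBlocks 1 0 K 1
      = Matrix.fromBlocks 0 0 (Pp * C (Fin.last n)) PD := by
    rw [Matrix.fromBlocks_multiply, Matrix.fromBlocks_multiply]
    simp [hPDK]
  refine ⟨?_, ?_, ?_⟩
  · rw [hLHS, hQinv, hconj]
  · -- characteristic polynomial
    have hchar : (List.ofFn fun j =>
          (Matrix.fromBlocks 0 0 0 1 : Matrix (Fin c ⊕ Fin d) (Fin c ⊕ Fin d) ℂ) * T j).prod.charpoly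
        = (Polynomial.X : Polynomial ℂ) ^ c * PD.charpoly := by
      rw [hLHS, ← hconj, charpoly_conj' _ _ _ hQiQ, Matrix.charpoly_fromBlocks_zero₂₁,
        charpoly_zero']
    have hcard : Multiset.card (PD.charpoly.roots.map (fun z : ℂ => ‖z‖)) = d := by
      rw [Multiset.card_map,
        Polynomial.splits_iff_card_roots.mp (IsAlgClosed.splits PD.charpoly),
        Matrix.charpoly_natDegree_eq_dim, Fintype.card_fin]
    have hroots : ((List.ofFn fun j =>
          (Matrix.fromBlocks 0 0 0 1 : Matrix (Fin c ⊕ Fin d) (Fin c ⊕ Fin d) ℂ) * T j).prod.charpoly.roots.map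
          (fun z : ℂ => ‖z‖))
        = Multiset.replicate c 0 + PD.charpoly.roots.map (fun z : ℂ => ‖z‖) := by
      rw [hchar, Polynomial.roots_mul
          (mul_ne_zero (pow_ne_zero _ Polynomial.X_ne_zero) PD.charpoly_monic.ne_zero),
        Polynomial.roots_pow, Polynomial.roots_X, Multiset.map_add]
      congr 1
      simp [Multiset.nsmul_singleton, Multiset.map_replicate]
    have hts := take_sort_prod' (PD.charpoly.roots.map (fun z : ℂ => ‖z‖)) c (by
      intro x hx
      obtain ⟨z, _, rfl⟩ := Multiset.mem_map.mp hx
      exact norm_nonneg _)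
    rw [hcard] at hts
    rw [rhoLam, hroots, hts, Matrix.det_eq_prod_roots_charpoly]
    exact (map_multiset_prod (normHom : ℂ →*₀ ℝ) _).symm
  · have hdet : PD.det = ∏ j, (D j).det := by
      rw [hPDdef, ← Matrix.coe_detMonoidHom, map_list_prod, List.map_ofFn, List.prod_ofFn]
      rfl
    rw [hdet, norm_prod]
end
end
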